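/- arXiv:0710.3001 — 7 statements merged into one kernel-verified Lean document; each statement's English description precedes it below -/
import Mathlib

section
/- Let M be a positive integer and q > 1 a real number with M ≥ q − 1, and let 0 < x ≤ M/(q−1). Define the sequence (a_i) recursively: if a_k has already been defined for all k < n, let a_n be the largest integer satisfying a_n ≤ M and a_1/q + ... + a_n/q^n < x. Then (a_i) is an infinite expansion of x, i.e., (a_i) has infinitely many nonzero terms and Σ_{i≥1} a_i q^{−i} = x. -/
open Classical in
/-- The next quasi-greedy digit: the largest integer `m ≤ M` with `s + m / q ^ (n+1) < x`,
where `s` is the value of the previously chosen digits. -/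
noncomputable def qgDigit (M : ℕ) (q x s : ℝ) (n : ℕ) : ℕ :=
  Nat.findGreatest (fun m => s + (m : ℝ) / q ^ (n + 1) < x) M

/-- Partial sums of the quasi-greedy expansion of `x` in base `q` with digits `≤ M`. -/
noncomputable def qgSum (M : ℕ) (q x : ℝ) : ℕ → ℝ
  | 0 => 0
  | n + 1 => qgSum M q x n + (qgDigit M q x (qgSum M q x n) n : ℝ) / q ^ (n + 1)

/-- `quasiGreedy M q x n` is the `(n+1)`-st digit (so indexing starts at 0) of the
quasi-greedy expansion of `x` in base `q` with digits in `{0, ..., M}`: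
recursively, it is the largest integer `a_n ≤ M` with `a_1/q + ⋯ + a_n/q^n < x`. -/
noncomputable def quasiGreedy (M : ℕ) (q x : ℝ) (n : ℕ) : ℕ :=
  qgDigit M q x (qgSum M q x n) n

/-- Proposition 2.1: if `M ≥ q - 1` and `0 < x ≤ M/(q-1)`, then the quasi-greedy
sequence is an infinite expansion of `x`. -/
theorem quasiGreedy_infinite_expansion (M : ℕ) (hM : 0 < M) (q x : ℝ) (hq : 1 < q)
    (hMq : (M : ℝ) ≥ q - 1) (hx0 : 0 < x) (hx1 : x ≤ (M : ℝ) / (q - 1)) :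
    {n | quasiGreedy M q x n ≠ 0}.Infinite ∧
      ∑' i, (quasiGreedy M q x i : ℝ) / q ^ (i + 1) = x := by
  classical
  have hq0 : (0:ℝ) < q := lt_trans one_pos hq
  have hq1 : (0:ℝ) < q - 1 := sub_pos.2 hq
  set C : ℝ := (M:ℝ) / (q - 1) with hC
  have hC1 : 1 ≤ C := (one_le_div hq1).2 hMq
  have hCM : C * (q - 1) = M := div_mul_cancel₀ _ (ne_of_gt hq1)
  have hpow : ∀ n : ℕ, (0:ℝ) < q ^ n := fun n => pow_pos hq0 n
  -- partial sums stay strictly below x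
  have hslt : ∀ n, qgSum M q x n < x := by
    intro n
    induction n with
    | zero => simpa [qgSum] using hx0
    | succ n ih =>
      rw [qgSum]
      have h0 : qgSum M q x n + ((0:ℕ):ℝ) / q ^ (n+1) < x := by simpa using ih
      have := Nat.findGreatest_spec (P := fun m => qgSum M q x n + (m:ℝ)/q^(n+1) < x)
        (Nat.zero_le M) h0
      simpa [qgDigit] using this
  -- error bound
  have hbd : ∀ n, x - qgSum M q x n ≤ C / q ^ n := by
    intro n
    induction n with
    | zero => simpa [qgSum] using hx1
    | succ n ih =>
      rw [qgSum]
      have hle : qgDigit M q x (qgSum M q x n) n ≤ M := Nat.findGreatest_le M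
      rcases eq_or_lt_of_le hle with hEq | hLt
      · have hCq : C * q - (M:ℝ) = C := by linarith [hCM]
        have key : C / q ^ n - (M:ℝ) / q ^ (n+1) = C / q ^ (n+1) := by
          have h2 := hpow n
          have : C / q ^ n - (M:ℝ) / q ^ (n+1) = (C * q - M) / q ^ (n+1) := by
            rw [pow_succ]; field_simp
          rw [this, hCq]
        rw [hEq]
        linarith [ih, key]
      · have hng := Nat.findGreatest_is_greatest
          (P := fun m => qgSum M q x n + (m:ℝ)/q^(n+1) < x)
          (Nat.lt_succ_self _) hLt
        push_neg at hng
        have hng' : x ≤ qgSum M q x n + ((qgDigit M q x (qgSum M q x n) n : ℝ) + 1) / q ^ (n+1) := by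
          simpa [qgDigit, Nat.cast_add, Nat.cast_one] using hng
        have h1 : (1:ℝ) / q ^ (n+1) ≤ C / q ^ (n+1) := by gcongr
        have := hpow (n+1)
        rw [add_div] at hng'
        linarith
  -- convergence of partial sums to x
  have hten : Filter.Tendsto (fun n => x - qgSum M q x n) Filter.atTop (nhds 0) := by
    have h0 : Filter.Tendsto (fun n : ℕ => C * (q⁻¹) ^ n) Filter.atTop (nhds (C * 0)) :=
      (tendsto_pow_atTop_nhds_zero_of_lt_one (by positivity)
        (by rw [inv_lt_one_iff₀]; right; exact hq)).const_mul C
    have h0' : Filter.Tendsto (fun n : ℕ => C / q ^ n) Filter.atTop (nhds 0) := by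
      simpa [div_eq_mul_inv, inv_pow] using h0
    exact squeeze_zero (fun n => le_of_lt (sub_pos.2 (hslt n))) hbd h0'
  have hts : Filter.Tendsto (qgSum M q x) Filter.atTop (nhds x) := by
    have := (tendsto_const_nhds : Filter.Tendsto (fun _ : ℕ => x) Filter.atTop (nhds x)).sub hten
    simpa using this
  -- partial sums of the series are qgSum
  have hps : ∀ n, ∑ i ∈ Finset.range n, (quasiGreedy M q x i : ℝ) / q ^ (i+1) = qgSum M q x n := by
    intro n
    induction n with
    | zero => simp [qgSum]
    | succ n ih => rw [Finset.sum_range_succ, ih, qgSum]; rfl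
  refine ⟨?_, ?_⟩
  · by_contra h
    rw [Set.not_infinite] at h
    obtain ⟨N, hN⟩ := h.bddAbove
    have hz : ∀ n, N < n → quasiGreedy M q x n = 0 := by
      intro n hn
      by_contra hz
      exact absurd (hN hz) (not_le.2 hn)
    have hconst : ∀ n, qgSum M q x (n + (N+1)) = qgSum M q x (N+1) := by
      intro n
      induction n with
      | zero => simp
      | succ n ih =>
        have : n + 1 + (N+1) = (n + (N+1)) + 1 := by ring
        rw [this, qgSum]
        have hz' : qgDigit M q x (qgSum M q x (n + (N+1))) (n + (N+1)) = 0 :=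
          hz _ (by omega)
        rw [hz', ih]; simp
    have h1 : Filter.Tendsto (fun n => qgSum M q x (n + (N+1))) Filter.atTop (nhds x) :=
      hts.comp (Filter.tendsto_add_atTop_nat (N+1))
    have h2 : Filter.Tendsto (fun n => qgSum M q x (n + (N+1))) Filter.atTop
        (nhds (qgSum M q x (N+1))) := by
      simpa [hconst] using (tendsto_const_nhds :
        Filter.Tendsto (fun _ : ℕ => qgSum M q x (N+1)) Filter.atTop (nhds (qgSum M q x (N+1))))
    have := tendsto_nhds_unique h1 h2
    exact absurd (hslt (N+1)) (by rw [← this]; exact lt_irrefl x)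
  · have hnn : ∀ i, (0:ℝ) ≤ (quasiGreedy M q x i : ℝ) / q ^ (i+1) := by
      intro i; positivity
    have hhs : HasSum (fun i => (quasiGreedy M q x i : ℝ) / q ^ (i+1)) x := by
      rw [hasSum_iff_tendsto_nat_of_nonneg hnn]
      simpa [hps] using hts
    exact hhs.tsum_eq
end

section
/- Let M be a positive integer. The map q ↦ (α_i), where (α_i) denotes the quasi-greedy expansion of 1 in base q, is a strictly increasing one-to-one correspondence between the interval (1, M+1] and the set of infinite sequences (α_i) with digits in {0,...,M} satisfying α_{n+1}α_{n+2}... ≤ α_1α_2... (lexicographically) whenever α_n < M. (Strictly increasing means: if 1 < q < q' ≤ M+1, the quasi-greedy expansion of 1 in base q is lexicographically smaller than that in base q'.) -/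
/-- Strict lexicographic order on digit sequences (indexed from 0). -/
def LexLt (a b : ℕ → ℕ) : Prop :=
  ∃ n, (∀ k, k < n → a k = b k) ∧ a n < b n

/-- Non-strict lexicographic order on digit sequences. -/
def LexLe (a b : ℕ → ℕ) : Prop :=
  LexLt a b ∨ a = b

namespace QG


lemma digit_le (M : ℕ) (q x : ℝ) (n : ℕ) : quasiGreedy M q x n ≤ M :=
  Nat.findGreatest_le M

lemma qgSum_succ (M : ℕ) (q x : ℝ) (n : ℕ) :
    qgSum M q x (n + 1) = qgSum M q x n + (quasiGreedy M q x n : ℝ) / q ^ (n + 1) := rfl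

lemma qgSum_lt (M : ℕ) (q : ℝ) {x : ℝ} (hx : 0 < x) : ∀ n, qgSum M q x n < x := by
  intro n
  induction n with
  | zero => exact hx
  | succ n ih =>
    rw [qgSum_succ]
    rcases Nat.eq_zero_or_pos (quasiGreedy M q x n) with h | h
    · simpa [h] using ih
    · exact Nat.findGreatest_of_ne_zero rfl (Nat.pos_iff_ne_zero.mp h)

lemma digit_max {M : ℕ} {q x : ℝ} {n : ℕ} (h : quasiGreedy M q x n < M) :
    x ≤ qgSum M q x n + ((quasiGreedy M q x n : ℝ) + 1) / q ^ (n + 1) := by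
  have := Nat.findGreatest_is_greatest (P := fun m => qgSum M q x n + (m : ℝ) / q ^ (n + 1) < x)
    (n := M) (k := quasiGreedy M q x n + 1) (by exact Nat.lt_succ_self _) h
  push_neg at this
  simpa using this

lemma findGreatest_congr {P Q : ℕ → Prop} [DecidablePred P] [DecidablePred Q]
    (h : ∀ n, P n ↔ Q n) : ∀ k, Nat.findGreatest P k = Nat.findGreatest Q k := by
  intro k
  induction k with
  | zero => rfl
  | succ k ih =>
    rw [Nat.findGreatest_succ, Nat.findGreatest_succ, ih]
    by_cases hp : Q (k + 1)
    · rw [if_pos ((h _).mpr hp), if_pos hp]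
    · rw [if_neg (fun hh => hp ((h _).mp hh)), if_neg hp]

lemma qgSum_eq_sum (M : ℕ) (q x : ℝ) (n : ℕ) :
    qgSum M q x n = ∑ k ∈ Finset.range n, (quasiGreedy M q x k : ℝ) / q ^ (k + 1) := by
  induction n with
  | zero => rfl
  | succ n ih => rw [Finset.sum_range_succ, qgSum_succ, ih]


lemma one_sub_qgSum_le {M : ℕ} {q : ℝ} (hq : 1 < q) (hqM : q ≤ (M : ℝ) + 1) (n : ℕ) :
    1 - qgSum M q 1 n ≤ (M : ℝ) / (q - 1) * (1 / q) ^ n := by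
  have hq0 : (0 : ℝ) < q := lt_trans one_pos hq
  have hq1 : (0 : ℝ) < q - 1 := by linarith
  have hM1 : (1 : ℝ) ≤ (M : ℝ) / (q - 1) := by
    rw [le_div_iff₀ hq1]; linarith
  induction n with
  | zero => show 1 - 0 ≤ _; simpa using hM1
  | succ n ih =>
    rw [qgSum_succ]
    rcases lt_or_eq_of_le (digit_le M q 1 n) with h | h
    · have hmax := digit_max h
      have hpow : (0 : ℝ) < q ^ (n + 1) := pow_pos hq0 _
      have h1 : 1 - (qgSum M q 1 n + (quasiGreedy M q 1 n : ℝ) / q ^ (n + 1)) ≤ 1 / q ^ (n + 1) := by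
        have : ((quasiGreedy M q 1 n : ℝ) + 1) / q ^ (n + 1)
            = (quasiGreedy M q 1 n : ℝ) / q ^ (n + 1) + 1 / q ^ (n + 1) := by ring
        linarith [hmax, this ▸ hmax]
      refine h1.trans ?_
      have hpe : (1 / q) ^ (n+1) = 1 / q ^ (n+1) := by rw [div_pow, one_pow]
      rw [hpe]
      exact le_mul_of_one_le_left (by positivity) hM1
    · have hpow : (0 : ℝ) < q ^ (n + 1) := pow_pos hq0 _
      have e1 : (quasiGreedy M q 1 n : ℝ) = (M : ℝ) := by exact_mod_cast h
      rw [e1]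
      have ihh : 1 - qgSum M q 1 n ≤ (M : ℝ) / (q - 1) * (1 / q) ^ n := ih
      have key : (M : ℝ) / (q - 1) * (1 / q) ^ n - (M : ℝ) / q ^ (n + 1)
          = (M : ℝ) / (q - 1) * (1 / q) ^ (n + 1) := by
        simp only [div_pow, one_pow]
        field_simp
        ring
      linarith [key ▸ sub_le_sub_right ihh ((M : ℝ) / q ^ (n + 1))]

lemma tendsto_qgSum {M : ℕ} {q : ℝ} (hq : 1 < q) (hqM : q ≤ (M : ℝ) + 1) :
    Filter.Tendsto (qgSum M q 1) Filter.atTop (nhds 1) := by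
  have hq0 : (0 : ℝ) < q := lt_trans one_pos hq
  have h1 : Filter.Tendsto (fun n : ℕ => (M : ℝ) / (q - 1) * (1 / q) ^ n)
      Filter.atTop (nhds 0) := by
    rw [show (0:ℝ) = (M : ℝ) / (q-1) * 0 by ring]
    exact (tendsto_pow_atTop_nhds_zero_of_lt_one (by positivity)
      (by rw [div_lt_one hq0]; linarith)).const_mul _
  have h2 : Filter.Tendsto (fun n => 1 - qgSum M q 1 n) Filter.atTop (nhds 0) := by
    apply squeeze_zero (fun n => by linarith [qgSum_lt M q one_pos n])
      (fun n => one_sub_qgSum_le hq hqM n) h1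
  have := h2.const_sub 1
  simpa using this

lemma infinite_nonzero {M : ℕ} {q : ℝ} (hq : 1 < q) (hqM : q ≤ (M : ℝ) + 1) :
    {n | quasiGreedy M q 1 n ≠ 0}.Infinite := by
  by_contra hfin
  rw [Set.not_infinite] at hfin
  have hfin' : {n | quasiGreedy M q 1 n ≠ 0}.Finite := hfin
  obtain ⟨N, hN⟩ : ∃ N, ∀ n, N ≤ n → quasiGreedy M q 1 n = 0 := by
    rcases Set.Finite.bddAbove hfin' with ⟨N, hN⟩
    refine ⟨N + 1, fun n hn => by
      by_contra h
      have h2 : n ≤ N := hN (show n ∈ {n | quasiGreedy M q 1 n ≠ 0} from h)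
      omega⟩
  have hconst : ∀ n, N ≤ n → qgSum M q 1 n = qgSum M q 1 N := by
    intro n hn
    induction n with
    | zero => simp_all
    | succ n ih =>
      rcases Nat.lt_or_ge N (n+1) with h | h
      · have hn' : N ≤ n := by omega
        rw [qgSum_succ, hN n hn', ih hn']; simp
      · have : N = n + 1 := by omega
        rw [this]
  have : Filter.Tendsto (qgSum M q 1) Filter.atTop (nhds (qgSum M q 1 N)) := by
    apply Filter.Tendsto.congr' _ tendsto_const_nhds
    filter_upwards [Filter.eventually_ge_atTop N] with n hn
    exact (hconst n hn).symm
  have := tendsto_nhds_unique this (tendsto_qgSum hq hqM)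
  linarith [qgSum_lt M q one_pos N, this]

open Classical in
lemma quasiGreedy_eq_findGreatest (M : ℕ) (q x : ℝ) (n : ℕ) :
    quasiGreedy M q x n
      = Nat.findGreatest (fun m => qgSum M q x n + (m : ℝ) / q ^ (n + 1) < x) M := rfl

lemma qgSum_congr_of_digits {M : ℕ} {q x y : ℝ} {n : ℕ}
    (h : ∀ k, k < n → quasiGreedy M q x k = quasiGreedy M q y k) :
    qgSum M q x n = qgSum M q y n := by
  induction n with
  | zero => rfl
  | succ n ih =>
    rw [qgSum_succ, qgSum_succ, h n (Nat.lt_succ_self n),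
      ih (fun k hk => h k (Nat.lt_succ_of_lt hk))]

lemma mono_x {M : ℕ} {q x y : ℝ} (hxy : x ≤ y) :
    LexLe (quasiGreedy M q x) (quasiGreedy M q y) := by
  by_cases h : quasiGreedy M q x = quasiGreedy M q y
  · exact Or.inr h
  · left
    have hne : ∃ n, quasiGreedy M q x n ≠ quasiGreedy M q y n := Function.ne_iff.mp h
    classical
    let n := Nat.find hne
    have hk : ∀ k, k < n → quasiGreedy M q x k = quasiGreedy M q y k := by
      intro k hk
      exact not_not.mp (Nat.find_min hne hk)
    have hs : qgSum M q x n = qgSum M q y n := qgSum_congr_of_digits hk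
    have hle : quasiGreedy M q x n ≤ quasiGreedy M q y n := by
      rw [quasiGreedy_eq_findGreatest, quasiGreedy_eq_findGreatest]
      exact Nat.findGreatest_mono (fun m hm => by rw [← hs]; linarith) le_rfl
    exact ⟨n, hk, lt_of_le_of_ne hle (Nat.find_spec hne)⟩

lemma self_similar {M : ℕ} {q : ℝ} (hq : 0 < q) (n : ℕ) :
    ∀ i, qgSum M q (q ^ (n + 1) * (1 - qgSum M q 1 (n + 1))) i
          = q ^ (n + 1) * (qgSum M q 1 (n + 1 + i) - qgSum M q 1 (n + 1)) ∧
        quasiGreedy M q (q ^ (n + 1) * (1 - qgSum M q 1 (n + 1))) i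
          = quasiGreedy M q 1 (n + 1 + i) := by
  set c : ℝ := q ^ (n + 1) with hcdef
  have hc : (0 : ℝ) < c := pow_pos hq _
  set s : ℝ := qgSum M q 1 (n + 1) with hsdef
  have key : ∀ (t u : ℝ), (c * (t - s) + u < c * (1 - s)) ↔ (t + u / c < 1) := by
    intro t u
    have h1 : c * (t - s) + u = c * ((t + u / c) - s) := by field_simp; ring
    rw [h1, mul_lt_mul_iff_right₀ hc, sub_lt_sub_iff_right]
  intro i
  induction i with
  | zero =>
    constructor
    · show (0:ℝ) = c * (s - s)
      ring
    · rw [quasiGreedy_eq_findGreatest, quasiGreedy_eq_findGreatest]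
      apply findGreatest_congr
      intro m
      show qgSum M q _ 0 + (m : ℝ) / q ^ (0 + 1) < c * (1 - s) ↔ _
      have h0 : qgSum M q (c * (1 - s)) 0 = c * (s - s) := by show (0:ℝ) = c * (s - s); ring
      rw [h0, key, add_zero]
      have : (m : ℝ) / q ^ (0 + 1) / c = (m : ℝ) / q ^ (n + 1 + 0 + 1) := by
        rw [div_div, hcdef, ← pow_add]
        ring_nf
      rw [this]
  | succ i ih =>
    obtain ⟨ihs, ihd⟩ := ih
    have hsum : qgSum M q (c * (1 - s)) (i + 1)
        = c * (qgSum M q 1 (n + 1 + (i + 1)) - s) := by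
      rw [qgSum_succ, ihs, ihd]
      have : n + 1 + (i + 1) = (n + 1 + i) + 1 := by ring
      rw [this, qgSum_succ]
      have hpow : c * ((quasiGreedy M q 1 (n + 1 + i) : ℝ) / q ^ (n + 1 + i + 1))
          = (quasiGreedy M q 1 (n + 1 + i) : ℝ) / q ^ (i + 1) := by
        rw [hcdef]
        have : q ^ (n + 1 + i + 1) = q ^ (n + 1) * q ^ (i + 1) := by rw [← pow_add]; ring_nf
        rw [this]
        field_simp
      rw [mul_sub, mul_sub] at *
      linarith [hpow]
    refine ⟨hsum, ?_⟩
    rw [quasiGreedy_eq_findGreatest, quasiGreedy_eq_findGreatest]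
    apply findGreatest_congr
    intro m
    show qgSum M q (c * (1 - s)) (i + 1) + (m : ℝ) / q ^ (i + 1 + 1) < c * (1 - s) ↔ _
    rw [hsum, key]
    have : (m : ℝ) / q ^ (i + 1 + 1) / c = (m : ℝ) / q ^ (n + 1 + (i + 1) + 1) := by
      rw [div_div, hcdef, ← pow_add]
      ring_nf
    rw [this]

lemma lex_tail {M : ℕ} {q : ℝ} (hq : 1 < q) {n : ℕ} (h : quasiGreedy M q 1 n < M) :
    LexLe (fun i => quasiGreedy M q 1 (n + 1 + i)) (quasiGreedy M q 1) := by
  have hq0 : (0 : ℝ) < q := lt_trans one_pos hq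
  set x' : ℝ := q ^ (n + 1) * (1 - qgSum M q 1 (n + 1)) with hx'def
  have hx'le : x' ≤ 1 := by
    have hmax := digit_max h
    rw [qgSum_succ] at hx'def
    have h1 : 1 - (qgSum M q 1 n + (quasiGreedy M q 1 n : ℝ) / q ^ (n + 1)) ≤ 1 / q ^ (n + 1) := by
      have : ((quasiGreedy M q 1 n : ℝ) + 1) / q ^ (n + 1)
          = (quasiGreedy M q 1 n : ℝ) / q ^ (n + 1) + 1 / q ^ (n + 1) := by ring
      rw [this] at hmax
      linarith
    rw [hx'def]
    have hpow : (0 : ℝ) < q ^ (n + 1) := pow_pos hq0 _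
    calc q ^ (n + 1) * (1 - (qgSum M q 1 n + (quasiGreedy M q 1 n : ℝ) / q ^ (n + 1)))
        ≤ q ^ (n + 1) * (1 / q ^ (n + 1)) := by
          exact mul_le_mul_of_nonneg_left h1 (le_of_lt hpow)
      _ = 1 := by field_simp
  have heq : (fun i => quasiGreedy M q 1 (n + 1 + i)) = quasiGreedy M q x' := by
    funext i
    exact ((self_similar hq0 n i).2).symm
  rw [heq]
  exact mono_x hx'le

lemma strict_mono_q {M : ℕ} {q q' : ℝ} (hq : 1 < q) (hqq' : q < q') (hq'M : q' ≤ (M : ℝ) + 1) :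
    LexLt (quasiGreedy M q 1) (quasiGreedy M q' 1) := by
  have hq' : 1 < q' := lt_trans hq hqq'
  have hqM : q ≤ (M : ℝ) + 1 := le_of_lt (lt_of_lt_of_le hqq' hq'M)
  have hq0 : (0 : ℝ) < q := lt_trans one_pos hq
  have hq'0 : (0 : ℝ) < q' := lt_trans one_pos hq'
  -- sequences differ
  have hne : quasiGreedy M q 1 ≠ quasiGreedy M q' 1 := by
    intro heq
    obtain ⟨i0, hi0⟩ := (infinite_nonzero hq hqM).nonempty
    have hi0' : quasiGreedy M q 1 i0 ≠ 0 := hi0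
    set ε : ℝ := (quasiGreedy M q 1 i0 : ℝ) * (1 / q ^ (i0 + 1) - 1 / q' ^ (i0 + 1)) with hεdef
    have hεpos : 0 < ε := by
      apply mul_pos
      · exact_mod_cast Nat.pos_of_ne_zero hi0'
      · have : q ^ (i0 + 1) < q' ^ (i0 + 1) := by
          exact pow_lt_pow_left₀ hqq' (le_of_lt hq0) (by omega)
        have h1 : (0:ℝ) < q ^ (i0+1) := pow_pos hq0 _
        have h2 : (0:ℝ) < q' ^ (i0+1) := pow_pos hq'0 _
        rw [sub_pos]
        exact one_div_lt_one_div_of_lt h1 this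
    have hbound : ∀ m, i0 + 1 ≤ m → ε ≤ qgSum M q 1 m - qgSum M q' 1 m := by
      intro m hm
      rw [qgSum_eq_sum, qgSum_eq_sum, ← Finset.sum_sub_distrib]
      have hterm : ∀ k ∈ Finset.range m,
          (0:ℝ) ≤ (quasiGreedy M q 1 k : ℝ) / q ^ (k + 1) - (quasiGreedy M q' 1 k : ℝ) / q' ^ (k + 1) := by
        intro k _
        rw [← heq]
        have : q ^ (k+1) ≤ q' ^ (k+1) := pow_le_pow_left₀ (le_of_lt hq0) (le_of_lt hqq') _
        have h1 : (0:ℝ) < q ^ (k+1) := pow_pos hq0 _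
        rw [sub_nonneg]
        exact div_le_div_of_nonneg_left (Nat.cast_nonneg _) h1 this
      have hmem : i0 ∈ Finset.range m := Finset.mem_range.mpr (by omega)
      have := Finset.single_le_sum hterm hmem
      refine le_trans ?_ this
      rw [← heq, hεdef]
      ring_nf
      apply le_of_eq
      ring
    have hlim : Filter.Tendsto (fun m => qgSum M q 1 m - qgSum M q' 1 m)
        Filter.atTop (nhds 0) := by
      have := (tendsto_qgSum hq hqM).sub (tendsto_qgSum hq' hq'M)
      simpa using this
    have : ε ≤ 0 := by
      apply ge_of_tendsto hlim
      filter_upwards [Filter.eventually_ge_atTop (i0 + 1)] with m hm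
      exact hbound m hm
    linarith
  obtain hne' := Function.ne_iff.mp hne
  classical
  set n := Nat.find hne' with hn
  have hk : ∀ k, k < n → quasiGreedy M q 1 k = quasiGreedy M q' 1 k := by
    intro k hkn
    exact not_not.mp (Nat.find_min hne' hkn)
  have hs : qgSum M q' 1 n ≤ qgSum M q 1 n := by
    rw [qgSum_eq_sum, qgSum_eq_sum]
    apply Finset.sum_le_sum
    intro k hkr
    rw [← hk k (Finset.mem_range.mp hkr)]
    have : q ^ (k+1) ≤ q' ^ (k+1) := pow_le_pow_left₀ (le_of_lt hq0) (le_of_lt hqq') _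
    exact div_le_div_of_nonneg_left (Nat.cast_nonneg _) (pow_pos hq0 _) this
  have hle : quasiGreedy M q 1 n ≤ quasiGreedy M q' 1 n := by
    rw [quasiGreedy_eq_findGreatest, quasiGreedy_eq_findGreatest]
    apply Nat.findGreatest_mono _ le_rfl
    intro m hm
    have h1 : (m : ℝ) / q' ^ (n+1) ≤ (m : ℝ) / q ^ (n+1) := by
      have : q ^ (n+1) ≤ q' ^ (n+1) := pow_le_pow_left₀ (le_of_lt hq0) (le_of_lt hqq') _
      exact div_le_div_of_nonneg_left (Nat.cast_nonneg _) (pow_pos hq0 _) this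
    linarith
  exact ⟨n, hk, lt_of_le_of_ne hle (Nat.find_spec hne')⟩

section Surj
variable {M : ℕ} {q : ℝ} {α : ℕ → ℕ}

/-- partial sums of the series of `α` in base `q` -/
noncomputable def pS (α : ℕ → ℕ) (q : ℝ) (k : ℕ) : ℝ :=
  ∑ i ∈ Finset.range k, (α i : ℝ) / q ^ (i + 1)

lemma summable_alpha (hq : 1 < q) (hd : ∀ i, α i ≤ M) :
    Summable (fun i => (α i : ℝ) / q ^ (i + 1)) := by
  have hq0 : (0 : ℝ) < q := lt_trans one_pos hq
  have hr0 : (0 : ℝ) ≤ 1 / q := by positivity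
  have hr1 : 1 / q < 1 := by rw [div_lt_one hq0]; linarith
  have hgeo : Summable (fun i : ℕ => (M : ℝ) * ((1 / q) * (1 / q) ^ i)) :=
    ((summable_geometric_of_lt_one hr0 hr1).mul_left _).mul_left _
  apply Summable.of_nonneg_of_le (fun i => by positivity) _ hgeo
  intro i
  have h1 : (1 / q) * (1 / q) ^ i = 1 / q ^ (i + 1) := by
    rw [div_pow, one_pow, pow_succ, div_mul_div_comm]
    ring_nf
  rw [h1]
  rw [div_le_iff₀ (pow_pos hq0 _)]
  have h2 : (M : ℝ) * (1 / q ^ (i + 1)) * q ^ (i + 1) = (M : ℝ) := by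
    field_simp
  rw [h2]
  exact_mod_cast hd i

lemma key_prefix (hq : 1 < q) (hd : ∀ i, α i ≤ M)
    (hlex : ∀ n, α n < M → LexLe (fun i => α (n + 1 + i)) α)
    (hS : ∀ m, pS α q m < 1) :
    ∀ k n, α n < M → (∑ i ∈ Finset.range k, (α (n + 1 + i) : ℝ) / q ^ (i + 1)) ≤ pS α q k := by
  have hq0 : (0 : ℝ) < q := lt_trans one_pos hq
  intro k
  induction k using Nat.strong_induction_on with
  | _ k IH =>
    intro n hn
    rcases hlex n hn with hlt | heq
    · obtain ⟨j, hj1x, hj2x⟩ := hlt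
      have hj1 : ∀ i, i < j → α (n + 1 + i) = α i := hj1x
      have hj2 : α (n + 1 + j) < α j := hj2x
      rcases le_or_gt k j with hjk | hjk
      · apply le_of_eq
        exact Finset.sum_congr rfl (fun i hi => by
          rw [hj1 i (lt_of_lt_of_le (Finset.mem_range.mp hi) hjk)])
      · -- j < k
        set r := k - (j + 1) with hr
        have hk : k = (j + 1) + r := by omega
        have hsplit : (∑ i ∈ Finset.range k, (α (n + 1 + i) : ℝ) / q ^ (i + 1))
            = (∑ i ∈ Finset.range j, (α i : ℝ) / q ^ (i + 1))
              + (α (n + 1 + j) : ℝ) / q ^ (j + 1)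
              + (∑ i ∈ Finset.range r, (α ((n + 1 + j) + 1 + i) : ℝ) / q ^ (i + 1))
                * (1 / q ^ (j + 1)) := by
          rw [hk, Finset.sum_range_add, Finset.sum_range_succ]
          congr 1
          · congr 1
            exact Finset.sum_congr rfl (fun i hi => by rw [hj1 i (Finset.mem_range.mp hi)])
          · rw [Finset.sum_mul]
            apply Finset.sum_congr rfl
            intro i _
            have h1 : n + 1 + (j + 1 + i) = (n + 1 + j) + 1 + i := by ring
            have h2 : q ^ (j + 1 + i + 1) = q ^ (i + 1) * q ^ (j + 1) := by
              rw [← pow_add]; ring_nf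
            rw [h1, h2]
            field_simp
        rw [hsplit]
        have hm : α (n + 1 + j) < M := lt_of_lt_of_le hj2 (hd j)
        have hIH := IH r (by omega) (n + 1 + j) hm
        have hSr : pS α q r < 1 := hS r
        have hc : (0:ℝ) < 1 / q ^ (j + 1) := by positivity
        have htail : (∑ i ∈ Finset.range r, (α ((n + 1 + j) + 1 + i) : ℝ) / q ^ (i + 1))
            * (1 / q ^ (j + 1)) ≤ 1 / q ^ (j + 1) := by
          calc _ ≤ pS α q r * (1 / q ^ (j + 1)) := by
                exact mul_le_mul_of_nonneg_right hIH (le_of_lt hc)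
            _ ≤ 1 * (1 / q ^ (j + 1)) := by
                exact mul_le_mul_of_nonneg_right (le_of_lt hSr) (le_of_lt hc)
            _ = 1 / q ^ (j + 1) := one_mul _
        have hstep : (α (n + 1 + j) : ℝ) / q ^ (j + 1) + 1 / q ^ (j + 1)
            ≤ (α j : ℝ) / q ^ (j + 1) := by
          rw [← add_div, div_le_div_iff₀ (pow_pos hq0 _) (pow_pos hq0 _)]
          have : (α (n + 1 + j) : ℝ) + 1 ≤ (α j : ℝ) := by
            exact_mod_cast hj2
          nlinarith [pow_pos hq0 (j+1)]
        have hfin : (∑ i ∈ Finset.range j, (α i : ℝ) / q ^ (i + 1)) + (α j : ℝ) / q ^ (j + 1)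
            ≤ pS α q k := by
          have : (∑ i ∈ Finset.range j, (α i : ℝ) / q ^ (i + 1)) + (α j : ℝ) / q ^ (j + 1)
              = pS α q (j + 1) := (Finset.sum_range_succ _ j).symm
          rw [this]
          unfold pS
          apply Finset.sum_le_sum_of_subset_of_nonneg
          · exact Finset.range_subset_range.mpr (by omega)
          · intro i _ _
            positivity
        linarith
    · apply le_of_eq
      exact Finset.sum_congr rfl (fun i _ => by rw [congrFun heq i])

lemma pS_lt_one (hq : 1 < q) (hd : ∀ i, α i ≤ M) (hinf : {n | α n ≠ 0}.Infinite)
    (hg : ∑' i, (α i : ℝ) / q ^ (i + 1) = 1) (m : ℕ) : pS α q m < 1 := by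
  have hsum := summable_alpha hq (M := M) hd
  have hq0 : (0 : ℝ) < q := lt_trans one_pos hq
  have hsplit := Summable.sum_add_tsum_nat_add m hsum
  rw [hg] at hsplit
  have htailpos : 0 < ∑' i, (α (i + m) : ℝ) / q ^ (i + m + 1) := by
    obtain ⟨i0, hi0mem, hi0⟩ := hinf.exists_gt m
    have hi0' : α i0 ≠ 0 := hi0mem
    apply Summable.tsum_pos ((summable_nat_add_iff m).mpr hsum) (fun i => by positivity) (i0 - m)
    have : i0 - m + m = i0 := by omega
    rw [this]
    have : 0 < α i0 := Nat.pos_of_ne_zero hi0'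
    positivity
  unfold pS
  linarith
end Surj

section S2
variable {M : ℕ} {q : ℝ} {α : ℕ → ℕ}
lemma tail_le_one (hq : 1 < q) (hd : ∀ i, α i ≤ M)
    (hlex : ∀ n, α n < M → LexLe (fun i => α (n + 1 + i)) α)
    (hinf : {n | α n ≠ 0}.Infinite)
    (hg : ∑' i, (α i : ℝ) / q ^ (i + 1) = 1) {n : ℕ} (hn : α n < M) :
    ∑' i, (α (n + 1 + i) : ℝ) / q ^ (i + 1) ≤ 1 := by
  have hq0 : (0 : ℝ) < q := lt_trans one_pos hq
  apply Real.tsum_le_of_sum_range_le (fun i => by positivity)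
  intro k
  exact le_of_lt (lt_of_le_of_lt
    (key_prefix hq hd hlex (pS_lt_one hq hd hinf hg) k n hn)
    (pS_lt_one hq hd hinf hg k))

lemma digits_eq (hq : 1 < q) (hd : ∀ i, α i ≤ M)
    (hlex : ∀ n, α n < M → LexLe (fun i => α (n + 1 + i)) α)
    (hinf : {n | α n ≠ 0}.Infinite)
    (hg : ∑' i, (α i : ℝ) / q ^ (i + 1) = 1) :
    ∀ n, qgSum M q 1 n = pS α q n ∧ quasiGreedy M q 1 n = α n := by
  have hq0 : (0 : ℝ) < q := lt_trans one_pos hq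
  have hsum := summable_alpha hq (M := M) hd
  have hdigit : ∀ n, qgSum M q 1 n = pS α q n → quasiGreedy M q 1 n = α n := by
    intro n hsn
    rw [quasiGreedy_eq_findGreatest, hsn]
    apply Nat.findGreatest_eq_iff.mpr
    refine ⟨hd n, fun _ => ?_, fun k hk1 hk2 => ?_⟩
    · show pS α q n + (α n : ℝ) / q ^ (n + 1) < 1
      have : pS α q n + (α n : ℝ) / q ^ (n + 1) = pS α q (n + 1) :=
        (Finset.sum_range_succ _ n).symm
      rw [this]
      exact pS_lt_one hq hd hinf hg (n + 1)
    · -- k > α n, k ≤ M : not (pS n + k/q^(n+1) < 1)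
      have hnM : α n < M := lt_of_lt_of_le hk1 hk2
      have htail := tail_le_one hq hd hlex hinf hg hnM
      have hsplit := Summable.sum_add_tsum_nat_add (n + 1) hsum
      rw [hg] at hsplit
      have hre : ∑' i, (α (i + (n + 1)) : ℝ) / q ^ (i + (n + 1) + 1)
          = (∑' i, (α (n + 1 + i) : ℝ) / q ^ (i + 1)) * (1 / q ^ (n + 1)) := by
        rw [← tsum_mul_right]
        congr 1
        funext i
        have h1 : i + (n + 1) = n + 1 + i := by ring
        have h2 : q ^ (n + 1 + i + 1) = q ^ (i + 1) * q ^ (n + 1) := by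
          rw [← pow_add]; ring_nf
        rw [h1, h2]
        field_simp
      have htail' : ∑' i, (α (i + (n + 1)) : ℝ) / q ^ (i + (n + 1) + 1) ≤ 1 / q ^ (n + 1) := by
        rw [hre]
        calc _ ≤ 1 * (1 / q ^ (n + 1)) :=
              mul_le_mul_of_nonneg_right htail (by positivity)
          _ = 1 / q ^ (n + 1) := one_mul _
      have hlow : 1 ≤ pS α q (n + 1) + 1 / q ^ (n + 1) := by
        have : pS α q (n + 1) = ∑ i ∈ Finset.range (n + 1), (α i : ℝ) / q ^ (i + 1) := rfl
        linarith [hsplit, htail', this]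
      rw [not_lt]
      have hps : pS α q (n + 1) = pS α q n + (α n : ℝ) / q ^ (n + 1) :=
        Finset.sum_range_succ _ n
      have hkk : (α n : ℝ) + 1 ≤ (k : ℝ) := by exact_mod_cast hk1
      have h4 : ((α n : ℝ) + 1) / q ^ (n + 1) = (α n : ℝ) / q ^ (n + 1) + 1 / q ^ (n + 1) := by
        ring
      have h5 : ((α n : ℝ) + 1) / q ^ (n + 1) ≤ (k : ℝ) / q ^ (n + 1) := by gcongr
      linarith [hlow, hps]
  intro n
  induction n with
  | zero => exact ⟨rfl, hdigit 0 rfl⟩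
  | succ n ih =>
    obtain ⟨ihs, ihd⟩ := ih
    have hsum' : qgSum M q 1 (n + 1) = pS α q (n + 1) := by
      rw [qgSum_succ, ihs, ihd]
      exact (Finset.sum_range_succ _ n).symm
    exact ⟨hsum', hdigit (n + 1) hsum'⟩

lemma exists_q (hM : 0 < M) (hd : ∀ i, α i ≤ M) (hinf : {n | α n ≠ 0}.Infinite) :
    ∃ q : ℝ, (1 < q ∧ q ≤ (M : ℝ) + 1) ∧ ∑' i, (α i : ℝ) / q ^ (i + 1) = 1 := by
  set g : ℝ → ℝ := fun q => ∑' i, (α i : ℝ) / q ^ (i + 1) with hgdef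
  -- pick two nonzero indices
  obtain ⟨F, hFsub, hFcard⟩ := hinf.exists_subset_card_eq 2
  have hFne : F.Nonempty := Finset.card_pos.mp (by omega)
  set N := F.max' hFne with hN
  -- q0
  set q0 : ℝ := (2 : ℝ) ^ ((N : ℝ) + 1)⁻¹ with hq0def
  have hNpos : (0 : ℝ) < (N : ℝ) + 1 := by positivity
  have hq01 : 1 < q0 := by
    rw [hq0def]
    apply Real.one_lt_rpow_iff_of_pos (by norm_num) |>.mpr
    left
    exact ⟨by norm_num, by positivity⟩
  have hq00 : (0 : ℝ) < q0 := lt_trans one_pos hq01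
  have hq0pow : q0 ^ (N + 1) = 2 := by
    rw [hq0def, ← Real.rpow_natCast ((2:ℝ) ^ ((N : ℝ) + 1)⁻¹) (N + 1), ← Real.rpow_mul (by norm_num)]
    rw [show ((N + 1 : ℕ) : ℝ) = (N : ℝ) + 1 by push_cast; ring]
    rw [inv_mul_cancel₀ (ne_of_gt hNpos), Real.rpow_one]
  have hq02 : q0 ≤ 2 := by
    rw [hq0def]
    calc (2:ℝ) ^ ((N : ℝ) + 1)⁻¹ ≤ (2:ℝ) ^ (1:ℝ) := by
          apply Real.rpow_le_rpow_of_exponent_le (by norm_num)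
          rw [inv_le_one_iff₀]
          right
          linarith [Nat.cast_nonneg (α := ℝ) N]
      _ = 2 := Real.rpow_one 2
  have hM2 : (2 : ℝ) ≤ (M : ℝ) + 1 := by
    have : (1 : ℝ) ≤ (M : ℝ) := by exact_mod_cast hM
    linarith
  have hq0M : q0 ≤ (M : ℝ) + 1 := le_trans hq02 hM2
  -- g q0 ≥ 1
  have hgq0 : 1 ≤ g q0 := by
    have hsum0 : Summable (fun i => (α i : ℝ) / q0 ^ (i + 1)) := summable_alpha hq01 hd
    have h1 : ∑ i ∈ F, (α i : ℝ) / q0 ^ (i + 1) ≤ g q0 := by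
      apply Summable.sum_le_tsum F (fun i _ => by positivity) hsum0
    have h2 : (1 : ℝ) ≤ ∑ i ∈ F, (α i : ℝ) / q0 ^ (i + 1) := by
      have hterm : ∀ i ∈ F, 1 / q0 ^ (N + 1) ≤ (α i : ℝ) / q0 ^ (i + 1) := by
        intro i hi
        have hα : 1 ≤ (α i : ℝ) := by
          have : α i ≠ 0 := hFsub hi
          exact_mod_cast Nat.one_le_iff_ne_zero.mpr this
        have hile : i + 1 ≤ N + 1 := by
          have := F.le_max' i hi
          omega
        have hple : q0 ^ (i + 1) ≤ q0 ^ (N + 1) :=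
          pow_le_pow_right₀ (le_of_lt hq01) hile
        calc 1 / q0 ^ (N + 1) ≤ 1 / q0 ^ (i + 1) :=
              one_div_le_one_div_of_le (pow_pos hq00 _) hple
          _ ≤ (α i : ℝ) / q0 ^ (i + 1) := by gcongr
      calc (1 : ℝ) = 2 * (1 / q0 ^ (N + 1)) := by rw [hq0pow]; norm_num
        _ = ∑ _i ∈ F, (1 / q0 ^ (N + 1) : ℝ) := by
            rw [Finset.sum_const, hFcard, nsmul_eq_mul]; norm_num
        _ ≤ ∑ i ∈ F, (α i : ℝ) / q0 ^ (i + 1) := Finset.sum_le_sum hterm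
    linarith
  -- g (M+1) ≤ 1
  have hgM : g ((M : ℝ) + 1) ≤ 1 := by
    set b : ℝ := (M : ℝ) + 1 with hbdef
    have hb1 : 1 < b := by
      have : (1 : ℝ) ≤ (M : ℝ) := by exact_mod_cast hM
      rw [hbdef]; linarith
    have hb0 : (0 : ℝ) < b := lt_trans one_pos hb1
    have hbne : b ≠ 0 := ne_of_gt hb0
    have hMne : (M : ℝ) ≠ 0 := by positivity
    have hr0 : (0 : ℝ) ≤ 1 / b := by positivity
    have hr1 : 1 / b < 1 := by rw [div_lt_one hb0]; exact hb1
    have hsb := summable_alpha hb1 hd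
    have hgeo : Summable (fun i : ℕ => ((M : ℝ) * (1 / b)) * (1 / b) ^ i) :=
      (summable_geometric_of_lt_one hr0 hr1).mul_left _
    have hle : ∀ i, (α i : ℝ) / b ^ (i + 1) ≤ ((M : ℝ) * (1 / b)) * (1 / b) ^ i := by
      intro i
      have h1 : ((M : ℝ) * (1 / b)) * (1 / b) ^ i = (M : ℝ) / b ^ (i + 1) := by
        rw [mul_assoc, ← pow_succ', div_pow, one_pow, mul_one_div]
      rw [h1]
      gcongr
      exact_mod_cast hd i
    calc g b ≤ ∑' i, ((M : ℝ) * (1 / b)) * (1 / b) ^ i := Summable.tsum_le_tsum hle hsb hgeo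
      _ = ((M : ℝ) * (1 / b)) * (1 - 1 / b)⁻¹ := by
          rw [tsum_mul_left, tsum_geometric_of_lt_one hr0 hr1]
      _ = 1 := by
          rw [hbdef]
          field_simp
          simp [hMne]
  -- IVT
  have hcont : ContinuousOn g (Set.Icc q0 ((M : ℝ) + 1)) := by
    apply continuousOn_tsum (u := fun i => (M : ℝ) * (1 / q0) ^ (i + 1))
    · intro i
      apply ContinuousOn.div continuousOn_const (Continuous.continuousOn (by continuity))
      intro q hq
      have : 0 < q := lt_of_lt_of_le hq00 hq.1
      positivity
    · have hr0 : (0 : ℝ) ≤ 1 / q0 := by positivity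
      have hr1 : 1 / q0 < 1 := by rw [div_lt_one hq00]; exact hq01
      have := ((summable_geometric_of_lt_one hr0 hr1).mul_left ((M:ℝ) * (1/q0)))
      apply Summable.congr this
      intro i
      rw [pow_succ ((1:ℝ)/q0) i]
      ring
    · intro i q hq
      have hq0q : 0 < q := lt_of_lt_of_le hq00 hq.1
      rw [Real.norm_eq_abs, abs_of_nonneg (by positivity), div_pow, one_pow, mul_one_div]
      exact div_le_div₀ (Nat.cast_nonneg M) (by exact_mod_cast hd i) (pow_pos hq00 _)
        (pow_le_pow_left₀ (le_of_lt hq00) hq.1 _)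
  have h1mem : (1 : ℝ) ∈ Set.Icc (g ((M : ℝ) + 1)) (g q0) := ⟨hgM, hgq0⟩
  obtain ⟨q, hqmem, hgq⟩ := intermediate_value_Icc' hq0M hcont h1mem
  exact ⟨q, ⟨lt_of_lt_of_le hq01 hqmem.1, hqmem.2⟩, hgq⟩

end S2
end QG

/-- Theorem 2.2 (a): `q ↦ (α_i)`, the quasi-greedy expansion of `1` in base `q`, is a
strictly increasing one-to-one correspondence between `(1, M+1]` and the set of infinite
sequences with digits in `{0,…,M}` satisfying `α_{n+1}α_{n+2}… ≤ α_1α_2…` whenever `α_n < M`. -/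
theorem quasiGreedy_one_bijection (M : ℕ) (hM : 0 < M) :
    (∀ q q' : ℝ, 1 < q → q < q' → q' ≤ (M : ℝ) + 1 →
      LexLt (quasiGreedy M q 1) (quasiGreedy M q' 1)) ∧
    Set.BijOn (fun q : ℝ => quasiGreedy M q 1) (Set.Ioc 1 ((M : ℝ) + 1))
      {α : ℕ → ℕ | (∀ i, α i ≤ M) ∧ {n | α n ≠ 0}.Infinite ∧
        ∀ n, α n < M → LexLe (fun i => α (n + 1 + i)) α} := by
  constructor
  · intro q q' hq hqq' hq'M
    exact QG.strict_mono_q hq hqq' hq'M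
  · refine ⟨?_, ?_, ?_⟩
    · intro q hq
      obtain ⟨hq1, hqM⟩ := hq
      exact ⟨fun i => QG.digit_le M q 1 i, QG.infinite_nonzero hq1 hqM,
        fun n hn => QG.lex_tail hq1 hn⟩
    · intro q hq q' hq' heq
      have heq' : quasiGreedy M q 1 = quasiGreedy M q' 1 := heq
      by_contra hne
      rcases lt_trichotomy q q' with h | h | h
      · obtain ⟨n, _, hlt⟩ := QG.strict_mono_q hq.1 h hq'.2
        rw [heq'] at hlt
        exact lt_irrefl _ hlt
      · exact hne h
      · obtain ⟨n, _, hlt⟩ := QG.strict_mono_q hq'.1 h hq.2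
        rw [heq'] at hlt
        exact lt_irrefl _ hlt
    · intro α hα
      obtain ⟨hd, hinf, hlex⟩ := hα
      obtain ⟨q, ⟨hq1, hqM⟩, hg⟩ := QG.exists_q hM hd hinf
      exact ⟨q, ⟨hq1, hqM⟩, funext fun n => (QG.digits_eq hq1 hd hlex hinf hg n).2⟩
end

section
/- Let M be a positive integer, fix q ∈ (1, M+1], and denote by (α_i) the quasi-greedy expansion of 1 in base q. The map x ↦ (a_i), where (a_i) denotes the quasi-greedy expansion of x, is a strictly increasing one-to-one correspondence between the interval (0, M/(q−1)] and the set of infinite sequences (a_i) with digits in {0,...,M} satisfying a_{n+1}a_{n+2}... ≤ α_1α_2... (lexicographically) whenever a_n < M. -/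
namespace QGAux

variable {M : ℕ} {q : ℝ} {b : ℕ → ℕ}

/-- partial sums of a digit sequence -/
noncomputable def pS (q : ℝ) (b : ℕ → ℕ) (n : ℕ) : ℝ :=
  ∑ i ∈ Finset.range n, (b i : ℝ) / q ^ (i + 1)

/-- value of a digit sequence -/
noncomputable def Vv (q : ℝ) (b : ℕ → ℕ) : ℝ := ∑' i, (b i : ℝ) / q ^ (i + 1)

lemma pS_zero : pS q b 0 = 0 := by simp [pS]

lemma pS_succ {n : ℕ} : pS q b (n + 1) = pS q b n + (b n : ℝ) / q ^ (n + 1) :=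
  Finset.sum_range_succ _ n

lemma term_le (hq1 : 1 < q) (hb : ∀ i, b i ≤ M) (i : ℕ) :
    (b i : ℝ) / q ^ (i + 1) ≤ ((M : ℝ) / q) * (1 / q) ^ i := by
  have hq0 : (0:ℝ) < q := by linarith
  have h1 : ((M : ℝ) / q) * (1 / q) ^ i = (M : ℝ) / q ^ (i + 1) := by
    rw [div_pow, one_pow, div_mul_div_comm, mul_one, pow_succ, mul_comm (q ^ i) q]
  rw [h1]
  have : (b i : ℝ) ≤ M := by exact_mod_cast hb i
  gcongr

lemma summable_of_le (hq1 : 1 < q) (hb : ∀ i, b i ≤ M) :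
    Summable (fun i => (b i : ℝ) / q ^ (i + 1)) := by
  have hq0 : (0:ℝ) < q := by linarith
  have hr : |1/q| < 1 := by
    rw [abs_of_pos (by positivity)]
    rw [div_lt_one hq0]; linarith
  exact Summable.of_nonneg_of_le (fun i => by positivity) (term_le hq1 hb)
    ((summable_geometric_of_abs_lt_one hr).mul_left _)

lemma tsum_geom (hq1 : 1 < q) : ∑' i : ℕ, ((M:ℝ) / q) * (1/q) ^ i = (M : ℝ) / (q - 1) := by
  have hq0 : (0:ℝ) < q := by linarith
  rw [tsum_mul_left, tsum_geometric_of_lt_one (by positivity) (by rw [div_lt_one hq0]; linarith)]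
  field_simp

lemma Vv_le (hq1 : 1 < q) (hb : ∀ i, b i ≤ M) : Vv q b ≤ (M : ℝ) / (q - 1) := by
  have hq0 : (0:ℝ) < q := by linarith
  have hr : |1/q| < 1 := by
    rw [abs_of_pos (by positivity), div_lt_one hq0]; linarith
  calc Vv q b ≤ ∑' i : ℕ, ((M:ℝ)/q) * (1/q)^i :=
        Summable.tsum_le_tsum (term_le hq1 hb) (summable_of_le hq1 hb)
          ((summable_geometric_of_abs_lt_one hr).mul_left _)
    _ = _ := tsum_geom hq1

lemma Vv_nonneg (hq1 : 1 < q) : 0 ≤ Vv q b :=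
  tsum_nonneg (fun i => by positivity)

lemma Vv_split (hq1 : 1 < q) (hb : ∀ i, b i ≤ M) (n : ℕ) :
    Vv q b = pS q b n + (1 / q ^ n) * Vv q (fun i => b (n + i)) := by
  have hq0 : (0:ℝ) < q := by linarith
  have hs := summable_of_le hq1 hb
  have key : ∀ i : ℕ, (b (i + n) : ℝ) / q ^ (i + n + 1)
      = (1 / q ^ n) * ((b (n + i) : ℝ) / q ^ (i + 1)) := by
    intro i
    rw [add_comm n i, show i + n + 1 = (i + 1) + n by ring, pow_add,
      div_mul_div_comm, one_mul, mul_comm (q ^ n)]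
  rw [Vv, ← Summable.sum_add_tsum_nat_add n hs, pS]
  congr 1
  rw [Vv, ← tsum_mul_left]
  exact tsum_congr key

lemma Vv_pos (hq1 : 1 < q) (hb : ∀ i, b i ≤ M) (i0 : ℕ) (h0 : b i0 ≠ 0) :
    0 < Vv q b := by
  have hq0 : (0:ℝ) < q := by linarith
  exact Summable.tsum_pos (summable_of_le hq1 hb) (fun i => by positivity) i0
    (by have : 0 < b i0 := Nat.pos_of_ne_zero h0; positivity)


section Digit
open Classical
variable {x x' s : ℝ} {n : ℕ}

lemma qgDigit_le : qgDigit M q x s n ≤ M := by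
  unfold qgDigit
  exact Nat.findGreatest_le (P := fun m => s + (m : ℝ) / q ^ (n + 1) < x) M

lemma qgDigit_spec (hs : s < x) :
    s + (qgDigit M q x s n : ℝ) / q ^ (n + 1) < x := by
  have h0 : s + ((0 : ℕ) : ℝ) / q ^ (n + 1) < x := by simpa using hs
  exact Nat.findGreatest_spec (P := fun m => s + (m : ℝ) / q ^ (n + 1) < x)
    (Nat.zero_le M) h0

lemma qgDigit_max (hq1 : 1 < q) (h : qgDigit M q x s n < M) :
    x ≤ s + ((qgDigit M q x s n : ℝ) + 1) / q ^ (n + 1) := by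
  by_contra hc
  push_neg at hc
  have hP : s + ((qgDigit M q x s n + 1 : ℕ) : ℝ) / q ^ (n + 1) < x := by
    push_cast; linarith
  have h2 : qgDigit M q x s n + 1 ≤ qgDigit M q x s n := by
    conv_rhs => rw [qgDigit]
    exact Nat.le_findGreatest (P := fun m => s + (m : ℝ) / q ^ (n + 1) < x) h hP
  omega

lemma qgDigit_eq (hq1 : 1 < q) (k : ℕ) (hkM : k ≤ M)
    (hk : s + (k : ℝ) / q ^ (n + 1) < x)
    (hmax : k < M → x ≤ s + ((k : ℝ) + 1) / q ^ (n + 1)) :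
    qgDigit M q x s n = k := by
  have hq0 : (0:ℝ) < q := by linarith
  rw [qgDigit, Nat.findGreatest_eq_iff]
  refine ⟨hkM, fun _ => hk, fun m hkm hmM hP => ?_⟩
  have h1 : (k : ℝ) + 1 ≤ (m : ℝ) := by exact_mod_cast hkm
  have h2 : ((k : ℝ) + 1) / q ^ (n + 1) ≤ (m : ℝ) / q ^ (n + 1) := by gcongr
  have := hmax (lt_of_lt_of_le hkm hmM)
  linarith

lemma qgDigit_mono (hxx' : x ≤ x') : qgDigit M q x s n ≤ qgDigit M q x' s n :=
  Nat.findGreatest_mono (fun m hm => lt_of_lt_of_le hm hxx') le_rfl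

end Digit

section Seq
variable {x : ℝ} {n : ℕ} {b : ℕ → ℕ}

lemma qg_le (M : ℕ) (q x : ℝ) (n : ℕ) : quasiGreedy M q x n ≤ M := qgDigit_le

lemma qgSum_succ : qgSum M q x (n + 1)
    = qgSum M q x n + (quasiGreedy M q x n : ℝ) / q ^ (n + 1) := rfl

lemma qgSum_eq_pS (M : ℕ) (q x : ℝ) (n : ℕ) :
    qgSum M q x n = pS q (quasiGreedy M q x) n := by
  induction n with
  | zero => simp [pS, qgSum]
  | succ n ih => rw [pS, Finset.sum_range_succ, ← pS, ← ih]; rfl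

lemma qgSum_lt (hx : 0 < x) (n : ℕ) : qgSum M q x n < x := by
  induction n with
  | zero => simpa [qgSum] using hx
  | succ n ih => exact qgDigit_spec ih

lemma qg_max (hq1 : 1 < q) (h : quasiGreedy M q x n < M) :
    x ≤ qgSum M q x (n + 1) + 1 / q ^ (n + 1) := by
  have h1 := qgDigit_max (M := M) (x := x) (s := qgSum M q x n) (n := n) hq1 h
  rw [qgSum_succ, quasiGreedy, add_assoc, ← add_div]
  exact h1

lemma qg_sub_le (hM : 0 < M) (hq1 : 1 < q) (hq2 : q ≤ (M : ℝ) + 1)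
    (hx0 : 0 < x) (n : ℕ) :
    x ≤ (M : ℝ) / (q - 1) → x - qgSum M q x n ≤ ((M : ℝ) / (q - 1)) / q ^ n := by
  intro hx2
  have hq0 : (0:ℝ) < q := by linarith
  have hq1' : (0:ℝ) < q - 1 := by linarith
  have hM1 : (1:ℝ) ≤ (M : ℝ) / (q - 1) := by
    rw [le_div_iff₀ hq1']; linarith
  induction n with
  | zero => simpa [qgSum] using hx2
  | succ n ih =>
    rcases lt_or_eq_of_le (qg_le M q x n) with h | h
    · have h1 := qg_max (M := M) (x := x) (n := n) hq1 h
      have h2 : (1:ℝ) / q ^ (n+1) ≤ ((M : ℝ) / (q - 1)) / q ^ (n+1) := by gcongr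
      linarith
    · rw [qgSum_succ, h]
      have key : ((M:ℝ) / (q - 1)) / q ^ n - (M : ℝ) / q ^ (n + 1)
          = ((M:ℝ) / (q - 1)) / q ^ (n + 1) := by
        field_simp
        ring
      linarith

lemma qg_tendsto (hM : 0 < M) (hq1 : 1 < q) (hq2 : q ≤ (M : ℝ) + 1)
    (hx0 : 0 < x) (hx2 : x ≤ (M : ℝ) / (q - 1)) :
    Filter.Tendsto (qgSum M q x) Filter.atTop (nhds x) := by
  have hq0 : (0:ℝ) < q := by linarith
  have hr0 : (0:ℝ) ≤ 1 / q := by positivity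
  have hr1 : (1:ℝ) / q < 1 := by rw [div_lt_one hq0]; linarith
  have hlow : Filter.Tendsto (fun n : ℕ => x - ((M:ℝ)/(q-1)) * (1/q) ^ n)
      Filter.atTop (nhds x) := by
    have h0 : Filter.Tendsto (fun n : ℕ => ((M:ℝ)/(q-1)) * (1/q) ^ n)
        Filter.atTop (nhds 0) := by
      simpa using (tendsto_pow_atTop_nhds_zero_of_lt_one hr0 hr1).const_mul ((M:ℝ)/(q-1))
    simpa using Filter.Tendsto.sub (tendsto_const_nhds (x := x)) h0
  refine tendsto_of_tendsto_of_tendsto_of_le_of_le hlow tendsto_const_nhds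
    (fun n => ?_) (fun n => (qgSum_lt hx0 n).le)
  have := qg_sub_le hM hq1 hq2 hx0 n hx2
  have heq : ((M:ℝ)/(q-1)) / q ^ n = ((M:ℝ)/(q-1)) * (1/q) ^ n := by
    rw [div_pow, one_pow, mul_one_div]
  linarith [heq ▸ this]

lemma qg_Vv (hM : 0 < M) (hq1 : 1 < q) (hq2 : q ≤ (M : ℝ) + 1)
    (hx0 : 0 < x) (hx2 : x ≤ (M : ℝ) / (q - 1)) :
    Vv q (quasiGreedy M q x) = x := by
  have hs := summable_of_le hq1 (qg_le M q x)
  have h1 : Filter.Tendsto (fun n => pS q (quasiGreedy M q x) n) Filter.atTop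
      (nhds (Vv q (quasiGreedy M q x))) := hs.hasSum.tendsto_sum_nat
  have h2 := qg_tendsto hM hq1 hq2 hx0 hx2
  rw [funext (qgSum_eq_pS M q x)] at h2
  exact tendsto_nhds_unique h1 h2

lemma qg_infinite (hM : 0 < M) (hq1 : 1 < q) (hq2 : q ≤ (M : ℝ) + 1)
    (hx0 : 0 < x) (hx2 : x ≤ (M : ℝ) / (q - 1)) :
    {n | quasiGreedy M q x n ≠ 0}.Infinite := by
  by_contra hfin
  rw [Set.not_infinite] at hfin
  obtain ⟨N, hN⟩ := hfin.bddAbove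
  have hzero : ∀ n, N < n → quasiGreedy M q x n = 0 := by
    intro n hn
    by_contra h0
    exact absurd (hN (Set.mem_setOf.mpr h0)) (by omega)
  have hconst : ∀ k, qgSum M q x (N + 1 + k) = qgSum M q x (N + 1) := by
    intro k
    induction k with
    | zero => rfl
    | succ k ih =>
      rw [show N + 1 + (k + 1) = (N + 1 + k) + 1 by ring, qgSum_succ, ih,
        hzero _ (by omega)]
      simp
  have h2 := qg_tendsto hM hq1 hq2 hx0 hx2
  have hcomp : Filter.Tendsto (fun k : ℕ => N + 1 + k) Filter.atTop Filter.atTop :=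
    Filter.tendsto_atTop_mono (fun k => Nat.le_add_left k (N + 1)) Filter.tendsto_id
  have h3 : Filter.Tendsto (fun k => qgSum M q x (N + 1 + k)) Filter.atTop (nhds x) :=
    h2.comp hcomp
  rw [funext hconst] at h3
  have : qgSum M q x (N + 1) = x := tendsto_nhds_unique tendsto_const_nhds h3
  exact absurd this (ne_of_lt (qgSum_lt hx0 _))

lemma qg_tail_le_one (hM : 0 < M) (hq1 : 1 < q) (hq2 : q ≤ (M : ℝ) + 1)
    (hx0 : 0 < x) (hx2 : x ≤ (M : ℝ) / (q - 1))
    (h : quasiGreedy M q x n < M) :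
    Vv q (fun i => quasiGreedy M q x (n + 1 + i)) ≤ 1 := by
  have hq0 : (0:ℝ) < q := by linarith
  have hsplit := Vv_split (b := quasiGreedy M q x) hq1 (qg_le M q x) (n + 1)
  rw [qg_Vv hM hq1 hq2 hx0 hx2, ← qgSum_eq_pS] at hsplit
  have hmax := qg_max (M := M) (x := x) (n := n) hq1 h
  have hpos : (0:ℝ) < 1 / q ^ (n + 1) := by positivity
  nlinarith [hsplit, hmax, hpos]

lemma qg_eq_of (hq1 : 1 < q) (hb : ∀ i, b i ≤ M) (hlt : ∀ n, pS q b n < x)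
    (hmax : ∀ n, b n < M → x ≤ pS q b (n + 1) + 1 / q ^ (n + 1)) :
    quasiGreedy M q x = b := by
  have hq0 : (0:ℝ) < q := by linarith
  have hd : ∀ n, qgSum M q x n = pS q b n → quasiGreedy M q x n = b n := by
    intro n hs
    rw [quasiGreedy, hs]
    apply qgDigit_eq hq1 (b n) (hb n)
    · have := hlt (n + 1)
      rw [pS_succ] at this
      exact this
    · intro h
      have h2 := hmax n h
      rw [pS_succ] at h2
      rw [add_div]
      linarith
  have key : ∀ n, qgSum M q x n = pS q b n := by
    intro n
    induction n with
    | zero => rw [pS_zero]; rfl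
    | succ n ih => rw [qgSum_succ, ih, hd n ih, ← pS_succ]
  funext n
  exact hd n (key n)

end Seq

section Lex
variable {x : ℝ} {n : ℕ} {a b c : ℕ → ℕ}

lemma lex_total (a b : ℕ → ℕ) : LexLe a b ∨ LexLt b a := by
  by_cases h : a = b
  · exact Or.inl (Or.inr h)
  · have hne : ∃ n, a n ≠ b n := Function.ne_iff.mp h
    have hn : a (Nat.find hne) ≠ b (Nat.find hne) := Nat.find_spec hne
    have hk : ∀ k, k < Nat.find hne → a k = b k := fun k hk =>
      not_not.mp (Nat.find_min hne hk)
    rcases lt_or_gt_of_ne hn with h1 | h1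
    · exact Or.inl (Or.inl ⟨_, hk, h1⟩)
    · exact Or.inr ⟨_, fun k hkn => (hk k hkn).symm, h1⟩

lemma pS_congr (heq : ∀ k, k < n → a k = b k) : pS q a n = pS q b n :=
  Finset.sum_congr rfl fun i hi => by
    rw [heq i (Finset.mem_range.mp hi)]

lemma shift_infinite (h : {m | c m ≠ 0}.Infinite) (k : ℕ) :
    {i | c (k + i) ≠ 0}.Infinite := by
  by_contra hfin
  rw [Set.not_infinite] at hfin
  apply h
  have hsub : {m | c m ≠ 0} ⊆ Set.Iic k ∪ (fun i => k + i) '' {i | c (k + i) ≠ 0} := by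
    intro m hm
    rcases le_or_gt m k with h1 | h1
    · exact Or.inl h1
    · refine Or.inr ⟨m - k, ?_, by show k + (m - k) = m; omega⟩
      show c (k + (m - k)) ≠ 0
      rw [show k + (m - k) = m by omega]
      exact hm
  exact Set.Finite.subset ((Set.finite_Iic k).union (hfin.image _)) hsub

lemma one_mem (hM : 0 < M) (hq1 : 1 < q) (hq2 : q ≤ (M : ℝ) + 1) :
    (1:ℝ) ≤ (M : ℝ) / (q - 1) := by
  rw [le_div_iff₀ (by linarith : (0:ℝ) < q - 1)]
  linarith

/-- any infinite sequence with digits ≤ M and value ≤ 1 is lex-≤ the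
quasi-greedy expansion of 1 -/
lemma le_alpha (hM : 0 < M) (hq1 : 1 < q) (hq2 : q ≤ (M : ℝ) + 1)
    (hb : ∀ i, b i ≤ M) (hinf : {n | b n ≠ 0}.Infinite) (hV : Vv q b ≤ 1) :
    LexLe b (quasiGreedy M q 1) := by
  have hq0 : (0:ℝ) < q := by linarith
  rcases lex_total b (quasiGreedy M q 1) with h | h
  · exact h
  exfalso
  obtain ⟨k, heq, hlt⟩ := h
  set al := quasiGreedy M q 1 with hal
  have halM : al k < M := lt_of_lt_of_le hlt (hb k)
  have h1 : (1:ℝ) ≤ qgSum M q 1 (k + 1) + 1 / q ^ (k + 1) := qg_max hq1 halM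
  have h2 : qgSum M q 1 (k + 1) + 1 / q ^ (k + 1) ≤ pS q b (k + 1) := by
    rw [qgSum_eq_pS, pS_succ, pS_succ, pS_congr (fun i hi => (heq i hi).symm)]
    have hcast : (al k : ℝ) + 1 ≤ (b k : ℝ) := by exact_mod_cast hlt
    have : ((al k : ℝ) + 1) / q ^ (k + 1) ≤ (b k : ℝ) / q ^ (k + 1) := by gcongr
    rw [add_assoc, ← add_div]
    linarith
  have h3 := Vv_split (b := b) hq1 hb (k + 1)
  have hpos : 0 < Vv q (fun i => b (k + 1 + i)) := by
    obtain ⟨m, hm, hmk⟩ := hinf.exists_gt k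
    refine Vv_pos hq1 (fun i => hb _) (m - (k + 1)) ?_
    show b (k + 1 + (m - (k + 1))) ≠ 0
    rw [show k + 1 + (m - (k + 1)) = m by omega]
    exact hm
  have hq1n : (0:ℝ) < 1 / q ^ (k + 1) := by positivity
  nlinarith

end Lex

section Adm
variable {x : ℝ} {n : ℕ} {a b : ℕ → ℕ}

lemma adm_tail_le_one (hM : 0 < M) (hq1 : 1 < q) (hq2 : q ≤ (M : ℝ) + 1)
    (hb : ∀ i, a i ≤ M)
    (hadm : ∀ n, a n < M → LexLe (fun i => a (n + 1 + i)) (quasiGreedy M q 1)) :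
    ∀ n, a n < M → Vv q (fun i => a (n + 1 + i)) ≤ 1 := by
  have hq0 : (0:ℝ) < q := by linarith
  set C : ℝ := (M : ℝ) / (q - 1) with hC
  have hC0 : 0 < C := by
    have : (0:ℝ) < q - 1 := by linarith
    positivity
  set al := quasiGreedy M q 1 with hal
  have hVal : Vv q al = 1 :=
    qg_Vv hM hq1 hq2 one_pos (one_mem hM hq1 hq2)
  have H : ∀ m : ℕ, ∀ n, a n < M → Vv q (fun i => a (n + 1 + i)) ≤ 1 + C / q ^ m := by
    intro m
    induction m with
    | zero =>
      intro n _
      have := Vv_le (b := fun i => a (n + 1 + i)) hq1 (fun i => hb _)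
      simpa using by linarith
    | succ m ih =>
      intro n hn
      rcases hadm n hn with h | h
      case inr =>
        rw [h, hVal]
        have : 0 < C / q ^ (m + 1) := by positivity
        linarith
      case inl =>
        obtain ⟨k, heq, hlt⟩ := h
        have hn' : a (n + 1 + k) < M := lt_of_lt_of_le hlt (qg_le M q 1 k)
        have hIH := ih (n + 1 + k) hn'
        -- split the tail at k+1
        have hsp := Vv_split (b := fun i => a (n + 1 + i)) hq1 (fun i => hb _) (k + 1)
        have hshift : (fun i => a (n + 1 + (k + 1 + i))) = fun i => a (n + 1 + k + 1 + i) := by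
          funext i; congr 1; omega
        rw [hshift] at hsp
        -- partial sums comparison
        have hps : pS q (fun i => a (n + 1 + i)) (k + 1)
            ≤ pS q al k + ((al k : ℝ) - 1) / q ^ (k + 1) := by
          rw [pS_succ, pS_congr heq]
          have hcast : (a (n + 1 + k) : ℝ) ≤ (al k : ℝ) - 1 := by
            have : a (n + 1 + k) + 1 ≤ al k := hlt
            have := (Nat.cast_le (α := ℝ)).mpr this
            push_cast at this
            linarith
          gcongr
        have hpsal : pS q al (k + 1) < 1 := by
          rw [← qgSum_eq_pS]; exact qgSum_lt one_pos (k + 1)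
        have hpsal' : pS q al (k + 1) = pS q al k + (al k : ℝ) / q ^ (k + 1) := pS_succ
        have hq1p : (0:ℝ) < 1 / q ^ (k + 1) := by positivity
        have hmul : (1 / q ^ (k + 1)) * Vv q (fun i => a (n + 1 + k + 1 + i))
            ≤ (1 / q ^ (k + 1)) * (1 + C / q ^ m) :=
          mul_le_mul_of_nonneg_left hIH (by positivity)
        have hpowle : C / q ^ (m + k + 1) ≤ C / q ^ (m + 1) :=
          div_le_div_of_nonneg_left hC0.le (by positivity)
            (pow_le_pow_right₀ (by linarith) (by omega))
        have hid : (1 / q ^ (k + 1)) * (1 + C / q ^ m)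
            = 1 / q ^ (k + 1) + C / q ^ (m + k + 1) := by
          have hpow : q ^ (m + k + 1) = q ^ (k + 1) * q ^ m := by ring
          rw [hpow]
          field_simp
        have hsub : ((al k : ℝ) - 1) / q ^ (k + 1)
            = (al k : ℝ) / q ^ (k + 1) - 1 / q ^ (k + 1) := sub_div _ _ _
        linarith
  intro n hn
  have hr0 : (0:ℝ) ≤ 1 / q := by positivity
  have hr1 : (1:ℝ) / q < 1 := by rw [div_lt_one hq0]; linarith
  have h0 : Filter.Tendsto (fun m : ℕ => C / q ^ m) Filter.atTop (nhds 0) := by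
    have h2 := (tendsto_pow_atTop_nhds_zero_of_lt_one hr0 hr1).const_mul C
    have h3 : ∀ m : ℕ, C * (1 / q) ^ m = C / q ^ m := fun m => by
      rw [div_pow, one_pow, mul_one_div]
    simpa only [h3, mul_zero] using h2
  have htend : Filter.Tendsto (fun m : ℕ => 1 + C / q ^ m) Filter.atTop (nhds 1) := by
    simpa using h0.const_add 1
  exact ge_of_tendsto htend (Filter.Eventually.of_forall (fun m => H m n hn))

/-- surjectivity core: an admissible sequence is the quasi-greedy expansion
of its value -/
lemma adm_eq_qg (hM : 0 < M) (hq1 : 1 < q) (hq2 : q ≤ (M : ℝ) + 1)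
    (hb : ∀ i, b i ≤ M) (hinf : {n | b n ≠ 0}.Infinite)
    (hadm : ∀ n, b n < M → LexLe (fun i => b (n + 1 + i)) (quasiGreedy M q 1)) :
    quasiGreedy M q (Vv q b) = b := by
  have hq0 : (0:ℝ) < q := by linarith
  apply qg_eq_of hq1 hb
  · intro n
    have hsp := Vv_split (b := b) hq1 hb n
    have hpos : 0 < Vv q (fun i => b (n + i)) := by
      obtain ⟨m, hm, hmk⟩ := hinf.exists_gt n
      refine Vv_pos hq1 (fun i => hb _) (m - n) ?_
      show b (n + (m - n)) ≠ 0
      rw [show n + (m - n) = m by omega]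
      exact hm
    have : (0:ℝ) < 1 / q ^ n := by positivity
    nlinarith
  · intro n hn
    have hsp := Vv_split (b := b) hq1 hb (n + 1)
    have htail := adm_tail_le_one hM hq1 hq2 hb hadm n hn
    have h1 : (0:ℝ) < 1 / q ^ (n + 1) := by positivity
    nlinarith

end Adm

end QGAux

open QGAux

/-- Theorem 2.2 (b): for fixed `q ∈ (1, M+1]`, the map `x ↦ (a_i)`, the quasi-greedy
expansion of `x`, is a strictly increasing one-to-one correspondence between `(0, M/(q-1)]`
and the set of infinite sequences with digits in `{0,…,M}` satisfying
`a_{n+1}a_{n+2}… ≤ α_1α_2…` whenever `a_n < M`, where `(α_i)` is the quasi-greedy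
expansion of `1`. -/
theorem quasiGreedy_bijection (M : ℕ) (hM : 0 < M) (q : ℝ) (hq1 : 1 < q)
    (hq2 : q ≤ (M : ℝ) + 1) :
    (∀ x x' : ℝ, 0 < x → x < x' → x' ≤ (M : ℝ) / (q - 1) →
      LexLt (quasiGreedy M q x) (quasiGreedy M q x')) ∧
    Set.BijOn (fun x : ℝ => quasiGreedy M q x) (Set.Ioc 0 ((M : ℝ) / (q - 1)))
      {a : ℕ → ℕ | (∀ i, a i ≤ M) ∧ {n | a n ≠ 0}.Infinite ∧
        ∀ n, a n < M → LexLe (fun i => a (n + 1 + i)) (quasiGreedy M q 1)} := by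
  have hq0 : (0:ℝ) < q := by linarith
  have mono : ∀ x x' : ℝ, 0 < x → x < x' → x' ≤ (M : ℝ) / (q - 1) →
      LexLt (quasiGreedy M q x) (quasiGreedy M q x') := by
    intro x x' hx0 hxx' hx'2
    have hx'0 : 0 < x' := lt_trans hx0 hxx'
    have hx2 : x ≤ (M : ℝ) / (q - 1) := le_trans hxx'.le hx'2
    have hne : quasiGreedy M q x ≠ quasiGreedy M q x' := by
      intro h
      have h1 : x = x' := by
        rw [← qg_Vv hM hq1 hq2 hx0 hx2, ← qg_Vv hM hq1 hq2 hx'0 hx'2, h]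
      linarith
    have hne' : ∃ n, quasiGreedy M q x n ≠ quasiGreedy M q x' n := Function.ne_iff.mp hne
    have hdn : quasiGreedy M q x (Nat.find hne') ≠ quasiGreedy M q x' (Nat.find hne') :=
      Nat.find_spec hne'
    have heq : ∀ k, k < Nat.find hne' → quasiGreedy M q x k = quasiGreedy M q x' k :=
      fun k hk => not_not.mp (Nat.find_min hne' hk)
    have hps : ∀ m, m ≤ Nat.find hne' → qgSum M q x m = qgSum M q x' m := by
      intro m
      induction m with
      | zero => intro _; rfl
      | succ m ih =>
        intro hm
        rw [qgSum_succ, qgSum_succ, ih (by omega), heq m (by omega)]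
    have hle : quasiGreedy M q x (Nat.find hne') ≤ quasiGreedy M q x' (Nat.find hne') := by
      rw [quasiGreedy, quasiGreedy, hps _ le_rfl]
      exact qgDigit_mono hxx'.le
    exact ⟨_, heq, lt_of_le_of_ne hle hdn⟩
  refine ⟨mono, ?_, ?_, ?_⟩
  · -- MapsTo
    intro x hx
    obtain ⟨hx0, hx2⟩ := hx
    refine ⟨fun i => qg_le M q x i, qg_infinite hM hq1 hq2 hx0 hx2, ?_⟩
    intro n hn
    exact le_alpha hM hq1 hq2 (fun i => qg_le M q x _)
      (shift_infinite (qg_infinite hM hq1 hq2 hx0 hx2) (n + 1))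
      (qg_tail_le_one hM hq1 hq2 hx0 hx2 hn)
  · -- InjOn
    intro x hx x' hx' h
    simp only at h
    by_contra hne
    rcases lt_or_gt_of_ne hne with hlt | hlt
    · obtain ⟨n, _, h2⟩ := mono x x' hx.1 hlt hx'.2
      rw [h] at h2
      exact lt_irrefl _ h2
    · obtain ⟨n, _, h2⟩ := mono x' x hx'.1 hlt hx.2
      rw [h] at h2
      exact lt_irrefl _ h2
  · -- SurjOn
    intro b hb
    obtain ⟨hbM, hbinf, hbadm⟩ := hb
    have hpos : 0 < Vv q b := by
      obtain ⟨i0, hi0⟩ := hbinf.nonempty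
      exact Vv_pos hq1 hbM i0 hi0
    exact ⟨Vv q b, ⟨hpos, Vv_le hq1 hbM⟩, adm_eq_qg hM hq1 hq2 hbM hbinf hbadm⟩
end

section
/- Let M be a positive integer, q > 1 a real number, and let (α_i) be an arbitrary expansion of 1 (i.e., a sequence with digits in {0,...,M} and Σ α_i q^{−i} = 1). If a sequence (a_i) with digits in {0,...,M} satisfies a_{n+1}a_{n+2}... ≤ α_1α_2... (lexicographically) whenever a_n < M, then Σ_{i≥n+1} a_i q^{−i} ≤ q^{−n} whenever a_n < M. -/
section Aux

variable (M : ℕ) (q : ℝ) (hq : 1 < q)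

lemma aux_summable (hq : 1 < q) (c : ℕ → ℕ) (hc : ∀ i, c i ≤ M) :
    Summable (fun i => (c i : ℝ) / q ^ (i + 1)) := by
  have hq0 : (0:ℝ) < q := lt_trans one_pos hq
  have hr : (1/q) < 1 := by
    rw [div_lt_one hq0]; exact hq
  have hr0 : (0:ℝ) ≤ 1/q := by positivity
  have hgeo : Summable (fun i : ℕ => (M:ℝ) * (1/q)^(i+1)) := by
    apply Summable.mul_left
    exact (summable_geometric_of_lt_one hr0 hr).comp_injective (add_left_injective 1)
  apply Summable.of_nonneg_of_le (fun i => by positivity) _ hgeo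
  intro i
  rw [div_pow, one_pow, mul_one_div, div_le_div_iff₀ (by positivity) (by positivity)]
  have : (c i : ℝ) ≤ M := by exact_mod_cast hc i
  nlinarith [pow_pos hq0 (i+1)]

lemma aux_bound (hq : 1 < q) (c : ℕ → ℕ) (hc : ∀ i, c i ≤ M) :
    ∑' i, (c i : ℝ) / q ^ (i + 1) ≤ (M:ℝ) / (q - 1) := by
  have hq0 : (0:ℝ) < q := lt_trans one_pos hq
  have hr : (1/q) < 1 := by rw [div_lt_one hq0]; exact hq
  have hr0 : (0:ℝ) ≤ 1/q := by positivity
  have hgeo : Summable (fun i : ℕ => (M:ℝ) * (1/q)^(i+1)) := by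
    apply Summable.mul_left
    exact (summable_geometric_of_lt_one hr0 hr).comp_injective (add_left_injective 1)
  have h1 : ∑' i, (c i : ℝ) / q ^ (i + 1) ≤ ∑' i : ℕ, (M:ℝ) * (1/q)^(i+1) := by
    apply Summable.tsum_le_tsum _ (aux_summable M q hq c hc) hgeo
    intro i
    rw [div_pow, one_pow, mul_one_div, div_le_div_iff₀ (by positivity) (by positivity)]
    have : (c i : ℝ) ≤ M := by exact_mod_cast hc i
    nlinarith [pow_pos hq0 (i+1)]
  refine h1.trans ?_
  have : ∑' i : ℕ, (M:ℝ) * (1/q)^(i+1) = (M:ℝ) * ((1/q) * (1 - 1/q)⁻¹) := by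
    rw [tsum_mul_left]
    congr 1
    have := tsum_geometric_of_lt_one hr0 hr
    calc ∑' i : ℕ, (1/q)^(i+1) = ∑' i : ℕ, (1/q) * (1/q)^i := by
          congr 1; funext i; ring
      _ = (1/q) * (1 - 1/q)⁻¹ := by rw [tsum_mul_left, this]
  rw [this]
  apply le_of_eq
  have hne : q - 1 ≠ 0 := by linarith
  have h2 : (1:ℝ) - 1/q = (q-1)/q := by field_simp
  rw [h2, inv_div]
  field_simp

end Aux

/-- Lemma 2.3, first part: if `(α_i)` is an expansion of `1` and `(a_i)` satisfies
`a_{n+1}a_{n+2}… ≤ α_1α_2…` whenever `a_n < M`, then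
`∑_{i ≥ n+1} a_i q^{-i} ≤ q^{-n}` whenever `a_n < M`. -/
theorem tail_sum_le (M : ℕ) (hM : 0 < M) (q : ℝ) (hq : 1 < q)
    (α : ℕ → ℕ) (hαM : ∀ i, α i ≤ M) (hα1 : ∑' i, (α i : ℝ) / q ^ (i + 1) = 1)
    (a : ℕ → ℕ) (haM : ∀ i, a i ≤ M)
    (ha : ∀ n, a n < M → LexLe (fun i => a (n + 1 + i)) α) :
    ∀ n, a n < M →
      ∑' i, (a (n + 1 + i) : ℝ) / q ^ (n + 1 + i + 1) ≤ 1 / q ^ (n + 1) := by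
  have hq0 : (0:ℝ) < q := lt_trans one_pos hq
  set T : ℕ → ℝ := fun n => ∑' i, (a (n + 1 + i) : ℝ) / q ^ (i + 1) with hT
  have hsumm : ∀ n, Summable (fun i => (a (n + 1 + i) : ℝ) / q ^ (i + 1)) := by
    intro n; exact aux_summable M q hq _ (fun i => haM _)
  -- main claim: T n ≤ 1 whenever a n < M
  have main : ∀ n, a n < M → T n ≤ 1 := by
    intro n₀ hn₀
    set S : Set ℝ := {x | ∃ n, a n < M ∧ T n = x} with hS
    have hne : S.Nonempty := ⟨T n₀, n₀, hn₀, rfl⟩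
    have hbdd : BddAbove S := by
      refine ⟨(M:ℝ) / (q - 1), ?_⟩
      rintro x ⟨n, _, rfl⟩
      exact aux_bound M q hq _ (fun i => haM _)
    set s := sSup S with hs
    -- splitting identity
    have hsplit : ∀ n m : ℕ, T n =
        (∑ i ∈ Finset.range (m + 1), (a (n + 1 + i) : ℝ) / q ^ (i + 1))
          + T (n + 1 + m) / q ^ (m + 1) := by
      intro n m
      have h := Summable.sum_add_tsum_nat_add (f := fun i => (a (n + 1 + i) : ℝ) / q ^ (i + 1))
        (m + 1) (hsumm n)
      have htail : ∑' i, (a (n + 1 + (i + (m + 1))) : ℝ) / q ^ (i + (m + 1) + 1)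
          = T (n + 1 + m) / q ^ (m + 1) := by
        rw [hT]
        rw [← tsum_div_const]
        congr 1; funext i
        have h1 : n + 1 + (i + (m + 1)) = n + 1 + m + 1 + i := by omega
        have h2 : q ^ (i + (m + 1) + 1) = q ^ (i + 1) * q ^ (m + 1) := by
          rw [← pow_add]; congr 1; omega
        rw [h1, h2, div_div]
      rw [htail] at h
      simp only [hT]
      rw [← h]
    -- key inequality for members of S when s > 1
    have key : 1 < s → ∀ x ∈ S, x ≤ 1 + (s - 1) / q := by
      intro hs1 x hx
      obtain ⟨n, hn, rfl⟩ := hx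
      rcases ha n hn with h | h
      · -- strict lex: get witness m
        obtain ⟨m, hpre, hm⟩ := h
        simp only at hpre hm
        have hαmM : a (n + 1 + m) < M := lt_of_lt_of_le hm (hαM m)
        have hTs : T (n + 1 + m) ≤ s := le_csSup hbdd ⟨n + 1 + m, hαmM, rfl⟩
        have hpartial : ∑ i ∈ Finset.range (m + 1), (α i : ℝ) / q ^ (i + 1) ≤ 1 := by
          rw [← hα1]
          exact Summable.sum_le_tsum _ (fun i _ => by positivity)
            (aux_summable M q hq α hαM)
        have hsum_le : ∑ i ∈ Finset.range (m + 1), (a (n + 1 + i) : ℝ) / q ^ (i + 1)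
            ≤ (∑ i ∈ Finset.range (m + 1), (α i : ℝ) / q ^ (i + 1)) - 1 / q ^ (m + 1) := by
          rw [Finset.sum_range_succ, Finset.sum_range_succ]
          have heq : ∑ i ∈ Finset.range m, (a (n + 1 + i) : ℝ) / q ^ (i + 1)
              = ∑ i ∈ Finset.range m, (α i : ℝ) / q ^ (i + 1) := by
            apply Finset.sum_congr rfl
            intro i hi
            rw [hpre i (Finset.mem_range.mp hi)]
          rw [heq]
          have hlast : (a (n + 1 + m) : ℝ) ≤ (α m : ℝ) - 1 := by
            have h' : (a (n+1+m) : ℝ) + 1 ≤ (α m : ℝ) := by exact_mod_cast hm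
            linarith
          have hpow : (0:ℝ) < q ^ (m + 1) := by positivity
          have : (a (n + 1 + m) : ℝ) / q ^ (m + 1) ≤ ((α m : ℝ) - 1) / q ^ (m + 1) := by
            gcongr
          rw [sub_div] at this
          linarith
        have hsplit' := hsplit n m
        have hTbound : T n ≤ 1 + (T (n + 1 + m) - 1) / q ^ (m + 1) := by
          rw [hsplit']
          have hpow : (0:ℝ) < q ^ (m + 1) := by positivity
          have : T (n + 1 + m) / q ^ (m + 1) = 1 / q ^ (m + 1)
              + (T (n + 1 + m) - 1) / q ^ (m + 1) := by ring
          rw [this]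
          linarith
        refine hTbound.trans ?_
        have hpowq : q ≤ q ^ (m + 1) := by
          calc q = q ^ 1 := (pow_one q).symm
          _ ≤ q ^ (m + 1) := pow_le_pow_right₀ (le_of_lt hq) (by omega)
        have : (T (n + 1 + m) - 1) / q ^ (m + 1) ≤ (s - 1) / q := by
          have h1 : (T (n + 1 + m) - 1) / q ^ (m + 1) ≤ (s - 1) / q ^ (m + 1) := by
            gcongr
          refine h1.trans ?_
          apply div_le_div_of_nonneg_left (by linarith) hq0 hpowq
        linarith
      · -- equal case: T n = 1
        have hT1 : T n = 1 := by
          simp only [hT]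
          rw [← hα1]
          exact tsum_congr (fun i => by
            rw [show a (n + 1 + i) = α i from congrFun h i])
        rw [hT1]
        have : (0:ℝ) ≤ (s - 1)/q := div_nonneg (by linarith) hq0.le
        linarith
    -- conclude s ≤ 1
    have hsle : s ≤ 1 := by
      by_contra hcon
      push_neg at hcon
      have h1 : s ≤ 1 + (s - 1) / q := csSup_le hne (key hcon)
      have h2 : (s - 1) / q < s - 1 := by
        rw [div_lt_iff₀ hq0]
        nlinarith
      linarith
    exact (le_csSup hbdd ⟨n₀, hn₀, rfl⟩).trans hsle
  -- derive the stated inequality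
  intro n hn
  have hTn := main n hn
  have heq : ∑' i, (a (n + 1 + i) : ℝ) / q ^ (n + 1 + i + 1) = T n / q ^ (n + 1) := by
    simp only [hT]
    rw [← tsum_div_const]
    congr 1; funext i
    have h2 : q ^ (n + 1 + i + 1) = q ^ (i + 1) * q ^ (n + 1) := by
      rw [← pow_add]; congr 1; omega
    rw [h2, div_div]
  rw [heq]
  gcongr
end

section
/- Let M be a positive integer, q > 1 a real number, and let (α_i) be an arbitrary expansion of 1 (i.e., a sequence with digits in {0,...,M} and Σ α_i q^{−i} = 1). If an infinite sequence (a_i) with digits in {0,...,M} satisfies a_{n+1}a_{n+2}... ≤ α_1α_2... (lexicographically) whenever a_n < M, then (a_i) is the quasi-greedy expansion of x := Σ_{i≥1} a_i q^{−i}. -/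
lemma qg_aux_summable (M : ℕ) (q : ℝ) (hq : 1 < q) (b : ℕ → ℕ) (hb : ∀ i, b i ≤ M) :
    Summable (fun i => (b i : ℝ) / q ^ (i + 1)) := by
  have hq0 : (0:ℝ) < q := lt_trans one_pos hq
  have hgeo : Summable (fun i : ℕ => (M:ℝ) * (1/q)^(i+1)) :=
    ((summable_geometric_of_lt_one (by positivity)
      (by rw [div_lt_one hq0]; exact hq)).mul_left _).comp_injective (add_left_injective 1)
  refine Summable.of_nonneg_of_le (fun i => by positivity) (fun i => ?_) hgeo
  rw [one_div, inv_pow, ← div_eq_mul_inv]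
  gcongr
  exact_mod_cast hb i

lemma qg_aux_tail (M : ℕ) (q : ℝ) (hq : 1 < q) (b : ℕ → ℕ) (hb : ∀ i, b i ≤ M) (k : ℕ) :
    ∑' i, (b i : ℝ) / q ^ (i + 1)
      = (∑ i ∈ Finset.range k, (b i : ℝ) / q ^ (i + 1))
        + (1 / q ^ k) * ∑' i, (b (k + i) : ℝ) / q ^ (i + 1) := by
  have hq0 : (0:ℝ) < q := lt_trans one_pos hq
  have hs := qg_aux_summable M q hq b hb
  rw [← Summable.sum_add_tsum_nat_add k hs]
  congr 1
  rw [← tsum_mul_left]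
  refine tsum_congr fun i => ?_
  rw [show i + k = k + i from Nat.add_comm i k, show k + i + 1 = k + (i+1) from by ring,
    pow_add]
  ring

/-- Lemma 2.3, second part: if `(α_i)` is an expansion of `1` and the infinite sequence
`(a_i)` satisfies `a_{n+1}a_{n+2}… ≤ α_1α_2…` whenever `a_n < M`, then `(a_i)` is the
quasi-greedy expansion of `x := ∑ a_i q^{-i}`. -/
theorem eq_quasiGreedy_of_lex_le (M : ℕ) (hM : 0 < M) (q : ℝ) (hq : 1 < q)
    (α : ℕ → ℕ) (hαM : ∀ i, α i ≤ M) (hα1 : ∑' i, (α i : ℝ) / q ^ (i + 1) = 1)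
    (a : ℕ → ℕ) (haM : ∀ i, a i ≤ M) (hainf : {n | a n ≠ 0}.Infinite)
    (ha : ∀ n, a n < M → LexLe (fun i => a (n + 1 + i)) α) :
    a = quasiGreedy M q (∑' i, (a i : ℝ) / q ^ (i + 1)) := by
  have hq0 : (0:ℝ) < q := lt_trans one_pos hq
  set x := ∑' i, (a i : ℝ) / q ^ (i + 1) with hxdef
  -- positivity of all tails
  have hpos : ∀ m : ℕ, 0 < ∑' i, (a (m + i) : ℝ) / q ^ (i + 1) := by
    intro m
    obtain ⟨k, hk, hmk⟩ := hainf.exists_gt m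
    have hsum : Summable (fun i => (a (m + i) : ℝ) / q ^ (i + 1)) :=
      qg_aux_summable M q hq _ (fun i => haM _)
    refine Summable.tsum_pos hsum (fun i => by positivity) (k - m) ?_
    rw [show m + (k - m) = k from by omega]
    have : 0 < a k := Nat.pos_of_ne_zero hk
    positivity
  -- the key recursive inequality
  have key : ∀ n, a n < M →
      (∑' i, (a (n+1+i) : ℝ) / q ^ (i + 1)) = 1 ∨
      ∃ c m, 0 < c ∧ c ≤ 1/q ∧ a m < M ∧
        (∑' i, (a (n+1+i) : ℝ) / q ^ (i + 1)) ≤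
          1 + c * ((∑' i, (a (m+1+i) : ℝ) / q ^ (i + 1)) - 1) := by
    intro n hn
    rcases ha n hn with hlex | heq
    · obtain ⟨j, hpre, hlt⟩ := hlex
      right
      refine ⟨1/q^(j+1), n+1+j, by positivity, ?_, lt_of_lt_of_le hlt (hαM j), ?_⟩
      · apply one_div_le_one_div_of_le hq0
        exact le_self_pow₀ hq.le (by omega)
      · have e1 := qg_aux_tail M q hq (fun i => a (n+1+i)) (fun i => haM _) (j+1)
        have e1' : ∑' i, (a (n+1+(j+1+i)) : ℝ) / q ^ (i+1)
            = ∑' i, (a (n+1+j+1+i) : ℝ) / q ^ (i+1) :=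
          tsum_congr fun i => by rw [show n+1+(j+1+i) = n+1+j+1+i from by ring]
        rw [e1'] at e1
        have e2 := qg_aux_tail M q hq α hαM (j+1)
        rw [hα1] at e2
        have hA : (∑ i ∈ Finset.range (j+1), (a (n+1+i) : ℝ) / q ^ (i+1))
            ≤ (∑ i ∈ Finset.range (j+1), (α i : ℝ) / q ^ (i+1)) - 1/q^(j+1) := by
          rw [Finset.sum_range_succ, Finset.sum_range_succ]
          have hp : ∑ i ∈ Finset.range j, (a (n+1+i) : ℝ) / q ^ (i+1)
              = ∑ i ∈ Finset.range j, (α i : ℝ) / q ^ (i+1) :=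
            Finset.sum_congr rfl fun i hi => by rw [show a (n+1+i) = α i from hpre i (Finset.mem_range.mp hi)]
          have hl : ((a (n+1+j) : ℝ)) ≤ (α j : ℝ) - 1 := by
            have h1 : a (n+1+j) + 1 ≤ α j := hlt
            have h2 : ((a (n+1+j) : ℝ)) + 1 ≤ (α j : ℝ) := by exact_mod_cast h1
            linarith
          have hdiv : ((a (n+1+j) : ℝ)) / q^(j+1) ≤ ((α j : ℝ) - 1) / q^(j+1) := by
            gcongr
          rw [sub_div] at hdiv
          linarith
        have hR : 0 ≤ ∑' i, (α (j+1+i) : ℝ) / q ^ (i+1) :=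
          tsum_nonneg fun i => by positivity
        have hc0 : (0:ℝ) < 1/q^(j+1) := by positivity
        have hcR : 0 ≤ (1/q^(j+1)) * ∑' i, (α (j+1+i) : ℝ) / q ^ (i+1) :=
          mul_nonneg hc0.le hR
        rw [mul_sub, mul_one]
        linarith
    · left
      calc ∑' i, (a (n+1+i) : ℝ) / q ^ (i+1)
          = ∑' i, (α i : ℝ) / q ^ (i+1) :=
            tsum_congr fun i => by rw [show a (n+1+i) = α i from congrFun heq i]
        _ = 1 := hα1
  -- all conditional tails are ≤ 1
  have hS1 : ∀ n, a n < M → (∑' i, (a (n+1+i) : ℝ) / q ^ (i + 1)) ≤ 1 := by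
    intro n hn
    set SS : Set ℝ := (fun m => ∑' i, (a (m+1+i) : ℝ) / q ^ (i + 1)) '' {m | a m < M}
      with hSSdef
    have hC : ∀ m : ℕ, (∑' i, (a (m+1+i) : ℝ) / q ^ (i + 1))
        ≤ ∑' i : ℕ, (M : ℝ) / q ^ (i + 1) := by
      intro m
      refine Summable.tsum_le_tsum (fun i => ?_)
        (qg_aux_summable M q hq _ (fun i => haM _))
        (qg_aux_summable M q hq (fun _ => M) (fun _ => le_refl M))
      gcongr
      exact_mod_cast haM _
    have hbdd : BddAbove SS := by
      refine ⟨∑' i : ℕ, (M : ℝ) / q ^ (i + 1), ?_⟩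
      rintro y ⟨m, hm, rfl⟩
      exact hC m
    have hne : SS.Nonempty := ⟨_, ⟨n, hn, rfl⟩⟩
    set S := sSup SS with hSdef
    have hub : ∀ m, a m < M → (∑' i, (a (m+1+i) : ℝ) / q ^ (i + 1)) ≤ S :=
      fun m hm => le_csSup hbdd ⟨m, hm, rfl⟩
    have hmax : ∀ m, a m < M →
        (∑' i, (a (m+1+i) : ℝ) / q ^ (i + 1)) ≤ max 1 (1 + (S - 1)/q) := by
      intro m hm
      rcases key m hm with h1 | ⟨c, m', hc, hcq, hm', hle⟩
      · rw [h1]; exact le_max_left _ _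
      · have hub' := hub m' hm'
        rcases le_or_gt (∑' i, (a (m'+1+i) : ℝ) / q ^ (i + 1)) 1 with h | h
        · refine le_trans hle (le_trans ?_ (le_max_left _ _))
          have : c * ((∑' i, (a (m'+1+i) : ℝ) / q ^ (i + 1)) - 1) ≤ 0 :=
            mul_nonpos_of_nonneg_of_nonpos hc.le (by linarith)
          linarith
        · refine le_trans hle (le_trans ?_ (le_max_right _ _))
          have h2 : c * ((∑' i, (a (m'+1+i) : ℝ) / q ^ (i + 1)) - 1)
              ≤ (1/q) * (S - 1) := by
            apply mul_le_mul hcq (by linarith) (by linarith) (by positivity)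
          have h3 : (1/q) * (S - 1) = (S - 1)/q := by ring
          linarith
    have hSle : S ≤ max 1 (1 + (S - 1)/q) := by
      apply csSup_le hne
      rintro y ⟨m, hm, rfl⟩
      exact hmax m hm
    have hS : S ≤ 1 := by
      by_contra hcon
      push_neg at hcon
      have h4 : 0 < (S - 1)/q := div_pos (by linarith) hq0
      have h5 : max 1 (1 + (S - 1)/q) = 1 + (S - 1)/q := max_eq_right (by linarith)
      rw [h5] at hSle
      have h6 : (S - 1)/q < S - 1 := div_lt_self (by linarith) hq
      linarith
    exact le_trans (hub n hn) hS
  -- the digit lemma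
  have hdigit : ∀ n, qgDigit M q x (∑ i ∈ Finset.range n, (a i : ℝ) / q ^ (i + 1)) n
      = a n := by
    intro n
    unfold qgDigit
    rw [Nat.findGreatest_eq_iff]
    have hsplit := qg_aux_tail M q hq a haM (n+1)
    rw [Finset.sum_range_succ, ← hxdef] at hsplit
    have hc : (0:ℝ) < 1/q^(n+1) := by positivity
    refine ⟨haM n, fun _ => ?_, fun m hm hmM => ?_⟩
    · have ht := hpos (n+1)
      have := mul_pos hc ht
      linarith
    · rw [not_lt]
      have hT1 := hS1 n (lt_of_lt_of_le hm hmM)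
      have h7 : (1/q^(n+1)) * (∑' i, (a (n+1+i) : ℝ) / q ^ (i + 1)) ≤ 1/q^(n+1) := by
        nlinarith
      have h8 : ((a n : ℝ)) + 1 ≤ (m : ℝ) := by exact_mod_cast hm
      have h9 : ((a n : ℝ) + 1) / q^(n+1) ≤ (m : ℝ) / q^(n+1) := by gcongr
      rw [add_div] at h9
      have h10 : (1:ℝ)/q^(n+1) = 1/q^(n+1) := rfl
      linarith
  -- partial sums of the quasi-greedy expansion agree
  have hqgsum : ∀ n, qgSum M q x n = ∑ i ∈ Finset.range n, (a i : ℝ) / q ^ (i + 1) := by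
    intro n
    induction n with
    | zero => simp [qgSum]
    | succ n ih =>
      rw [qgSum, ih, hdigit n, Finset.sum_range_succ]
  funext n
  have : quasiGreedy M q x n = a n := by
    unfold quasiGreedy
    rw [hqgsum n, hdigit n]
  rw [this]
end

section
/- Let M be a positive integer, fix q ∈ (1, M+1], and denote by (α_i) the quasi-greedy expansion of 1 in base q. The map x ↦ (b_i), where (b_i) denotes the greedy expansion of x, is a strictly increasing one-to-one correspondence between the interval [0, M/(q−1)] and the set of all sequences (b_i) with digits in {0,...,M} satisfying b_{n+1}b_{n+2}... < α_1α_2... (strict lexicographic inequality) whenever b_n < M. -/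
open Classical in
/-- The next greedy digit: the largest integer `m ≤ M` with `s + m / q ^ (n+1) ≤ x`,
where `s` is the value of the previously chosen digits. -/
noncomputable def gDigit (M : ℕ) (q x s : ℝ) (n : ℕ) : ℕ :=
  Nat.findGreatest (fun m => s + (m : ℝ) / q ^ (n + 1) ≤ x) M

/-- Partial sums of the greedy expansion of `x` in base `q` with digits `≤ M`. -/
noncomputable def gSum (M : ℕ) (q x : ℝ) : ℕ → ℝ
  | 0 => 0
  | n + 1 => gSum M q x n + (gDigit M q x (gSum M q x n) n : ℝ) / q ^ (n + 1)

/-- `greedy M q x n` is the `(n+1)`-st digit (indexing from 0) of the greedy expansion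
of `x` in base `q` with digits in `{0, ..., M}`: recursively, it is the largest
integer `b_n ≤ M` with `b_1/q + ⋯ + b_n/q^n ≤ x`. -/
noncomputable def greedy (M : ℕ) (q x : ℝ) (n : ℕ) : ℕ :=
  gDigit M q x (gSum M q x n) n


section Aux

open Filter

variable {M : ℕ} {q x : ℝ}

private lemma fgCongr {P Q : ℕ → Prop} [DecidablePred P] [DecidablePred Q]
    (h : ∀ n, P n ↔ Q n) (k : ℕ) : Nat.findGreatest P k = Nat.findGreatest Q k :=
  le_antisymm (Nat.findGreatest_mono (fun n hn => (h n).1 hn) le_rfl)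
    (Nat.findGreatest_mono (fun n hn => (h n).2 hn) le_rfl)

lemma greedy_le (n : ℕ) : greedy M q x n ≤ M := Nat.findGreatest_le M

lemma quasiGreedy_le (n : ℕ) : quasiGreedy M q x n ≤ M := Nat.findGreatest_le M

lemma gSum_succ (n : ℕ) :
    gSum M q x (n + 1) = gSum M q x n + (greedy M q x n : ℝ) / q ^ (n + 1) := rfl

lemma qgSum_succ (n : ℕ) :
    qgSum M q x (n + 1) = qgSum M q x n + (quasiGreedy M q x n : ℝ) / q ^ (n + 1) := rfl

lemma gSum_le (hx : 0 ≤ x) : ∀ n, gSum M q x n ≤ x := by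
  classical
  intro n
  induction n with
  | zero => exact hx
  | succ n ih =>
    have h0 : gSum M q x n + ((0 : ℕ) : ℝ) / q ^ (n + 1) ≤ x := by simpa using ih
    exact Nat.findGreatest_spec (P := fun m => gSum M q x n + (m : ℝ) / q ^ (n + 1) ≤ x)
      (Nat.zero_le M) h0

lemma qgSum_lt (hx : 0 < x) : ∀ n, qgSum M q x n < x := by
  classical
  intro n
  induction n with
  | zero => exact hx
  | succ n ih =>
    have h0 : qgSum M q x n + ((0 : ℕ) : ℝ) / q ^ (n + 1) < x := by simpa using ih
    exact Nat.findGreatest_spec (P := fun m => qgSum M q x n + (m : ℝ) / q ^ (n + 1) < x)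
      (Nat.zero_le M) h0

open Classical in
lemma greedy_max {n : ℕ} (h : greedy M q x n < M) :
    x < gSum M q x n + ((greedy M q x n : ℝ) + 1) / q ^ (n + 1) := by
  have : ¬ (gSum M q x n + ((greedy M q x n + 1 : ℕ) : ℝ) / q ^ (n + 1) ≤ x) :=
    Nat.findGreatest_is_greatest (P := fun m => gSum M q x n + (m : ℝ) / q ^ (n + 1) ≤ x)
      (n := M) (Nat.lt_succ_self _) h
  push_neg at this
  simpa using this

open Classical in
lemma quasiGreedy_max {n : ℕ} (h : quasiGreedy M q x n < M) :
    x ≤ qgSum M q x n + ((quasiGreedy M q x n : ℝ) + 1) / q ^ (n + 1) := by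
  have : ¬ (qgSum M q x n + ((quasiGreedy M q x n + 1 : ℕ) : ℝ) / q ^ (n + 1) < x) :=
    Nat.findGreatest_is_greatest (P := fun m => qgSum M q x n + (m : ℝ) / q ^ (n + 1) < x)
      (n := M) (Nat.lt_succ_self _) h
  push_neg at this
  simpa using this

lemma gSum_eq_sum (n : ℕ) :
    gSum M q x n = ∑ i ∈ Finset.range n, (greedy M q x i : ℝ) / q ^ (i + 1) := by
  induction n with
  | zero => rfl
  | succ n ih => rw [Finset.sum_range_succ, ← ih]; rfl

lemma qgSum_eq_sum (n : ℕ) :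
    qgSum M q x n = ∑ i ∈ Finset.range n, (quasiGreedy M q x i : ℝ) / q ^ (i + 1) := by
  induction n with
  | zero => rfl
  | succ n ih => rw [Finset.sum_range_succ, ← ih]; rfl

lemma one_le_C (hq1 : 1 < q) (hq2 : q ≤ (M : ℝ) + 1) : (1 : ℝ) ≤ (M : ℝ) / (q - 1) := by
  rw [le_div_iff₀ (by linarith)]; linarith

lemma gSum_tail (hq1 : 1 < q) (hq2 : q ≤ (M : ℝ) + 1) (hx0 : 0 ≤ x)
    (hxC : x ≤ (M : ℝ) / (q - 1)) :
    ∀ n, x - gSum M q x n ≤ ((M : ℝ) / (q - 1)) / q ^ n := by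
  have hq0 : (0 : ℝ) < q := lt_trans one_pos hq1
  intro n
  induction n with
  | zero => simpa [gSum] using hxC
  | succ n ih =>
    have hpow : (0 : ℝ) < q ^ (n + 1) := pow_pos hq0 _
    rcases lt_or_eq_of_le (greedy_le (M := M) (q := q) (x := x) n) with h | h
    · have hmax := greedy_max (M := M) (q := q) (x := x) h
      have hC1 : (1 : ℝ) ≤ (M : ℝ) / (q - 1) := one_le_C hq1 hq2
      have e : ((greedy M q x n : ℝ) + 1) / q ^ (n + 1)
          = (greedy M q x n : ℝ) / q ^ (n + 1) + 1 / q ^ (n + 1) := by ring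
      rw [e] at hmax
      have h2 : 1 / q ^ (n + 1) ≤ ((M : ℝ) / (q - 1)) / q ^ (n + 1) := by gcongr
      rw [gSum_succ]
      linarith
    · have key : ((M : ℝ) / (q - 1)) / q ^ n
          = ((M : ℝ) / (q - 1)) / q ^ (n + 1) + (M : ℝ) / q ^ (n + 1) := by
        have h1 : q - 1 ≠ 0 := by linarith
        have h2 : (q : ℝ) ^ n ≠ 0 := ne_of_gt (pow_pos hq0 _)
        have h3 : q ≠ 0 := ne_of_gt hq0
        rw [pow_succ]
        field_simp
        ring
      rw [gSum_succ, h]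
      rw [key] at ih
      linarith

lemma qgSum_tail (hq1 : 1 < q) (hq2 : q ≤ (M : ℝ) + 1) :
    ∀ n, 1 - qgSum M q 1 n ≤ ((M : ℝ) / (q - 1)) / q ^ n := by
  have hq0 : (0 : ℝ) < q := lt_trans one_pos hq1
  intro n
  induction n with
  | zero => simpa [qgSum] using one_le_C hq1 hq2
  | succ n ih =>
    have hpow : (0 : ℝ) < q ^ (n + 1) := pow_pos hq0 _
    rcases lt_or_eq_of_le (quasiGreedy_le (M := M) (q := q) (x := 1) n) with h | h
    · have hmax := quasiGreedy_max (M := M) (q := q) (x := 1) h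
      have hC1 : (1 : ℝ) ≤ (M : ℝ) / (q - 1) := one_le_C hq1 hq2
      have e : ((quasiGreedy M q 1 n : ℝ) + 1) / q ^ (n + 1)
          = (quasiGreedy M q 1 n : ℝ) / q ^ (n + 1) + 1 / q ^ (n + 1) := by ring
      rw [e] at hmax
      have h2 : 1 / q ^ (n + 1) ≤ ((M : ℝ) / (q - 1)) / q ^ (n + 1) := by gcongr
      rw [qgSum_succ]
      linarith
    · have key : ((M : ℝ) / (q - 1)) / q ^ n
          = ((M : ℝ) / (q - 1)) / q ^ (n + 1) + (M : ℝ) / q ^ (n + 1) := by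
        have h1 : q - 1 ≠ 0 := by linarith
        have h2 : (q : ℝ) ^ n ≠ 0 := ne_of_gt (pow_pos hq0 _)
        have h3 : q ≠ 0 := ne_of_gt hq0
        rw [pow_succ]
        field_simp
        ring
      rw [qgSum_succ, h]
      rw [key] at ih
      linarith

lemma tendsto_C_div_pow (hq1 : 1 < q) (c : ℝ) :
    Filter.Tendsto (fun n : ℕ => c / q ^ n) Filter.atTop (nhds 0) := by
  have hq0 : (0 : ℝ) < q := lt_trans one_pos hq1
  have h1 : Filter.Tendsto (fun n : ℕ => (q⁻¹) ^ n) Filter.atTop (nhds 0) :=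
    tendsto_pow_atTop_nhds_zero_of_lt_one (by positivity) (inv_lt_one_of_one_lt₀ hq1)
  have := h1.const_mul c
  rw [mul_zero] at this
  convert this using 2 with n
  rw [div_eq_mul_inv, inv_pow]

lemma hasSum_greedy (hq1 : 1 < q) (hq2 : q ≤ (M : ℝ) + 1) (hx0 : 0 ≤ x)
    (hxC : x ≤ (M : ℝ) / (q - 1)) :
    HasSum (fun i => (greedy M q x i : ℝ) / q ^ (i + 1)) x := by
  have hq0 : (0 : ℝ) < q := lt_trans one_pos hq1
  rw [hasSum_iff_tendsto_nat_of_nonneg (fun i => by positivity)]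
  have he : (fun n => ∑ i ∈ Finset.range n, (greedy M q x i : ℝ) / q ^ (i + 1))
      = fun n => gSum M q x n := by
    funext n; exact (gSum_eq_sum n).symm
  rw [he]
  have hlow : Filter.Tendsto (fun n : ℕ => x - ((M : ℝ) / (q - 1)) / q ^ n)
      Filter.atTop (nhds x) := by
    have := (tendsto_C_div_pow hq1 ((M : ℝ) / (q - 1))).const_sub x
    simpa using this
  exact tendsto_of_tendsto_of_tendsto_of_le_of_le hlow tendsto_const_nhds
    (fun n => by linarith [gSum_tail hq1 hq2 hx0 hxC n]) (fun n => gSum_le hx0 n)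

lemma hasSum_quasi (hq1 : 1 < q) (hq2 : q ≤ (M : ℝ) + 1) :
    HasSum (fun i => (quasiGreedy M q 1 i : ℝ) / q ^ (i + 1)) 1 := by
  have hq0 : (0 : ℝ) < q := lt_trans one_pos hq1
  rw [hasSum_iff_tendsto_nat_of_nonneg (fun i => by positivity)]
  have he : (fun n => ∑ i ∈ Finset.range n, (quasiGreedy M q 1 i : ℝ) / q ^ (i + 1))
      = fun n => qgSum M q 1 n := by
    funext n; exact (qgSum_eq_sum n).symm
  rw [he]
  have hlow : Filter.Tendsto (fun n : ℕ => 1 - ((M : ℝ) / (q - 1)) / q ^ n)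
      Filter.atTop (nhds 1) := by
    have := (tendsto_C_div_pow hq1 ((M : ℝ) / (q - 1))).const_sub 1
    simpa using this
  exact tendsto_of_tendsto_of_tendsto_of_le_of_le hlow tendsto_const_nhds
    (fun n => by linarith [qgSum_tail hq1 hq2 n]) (fun n => le_of_lt (qgSum_lt one_pos n))

lemma summable_digits (hq1 : 1 < q) {c : ℕ → ℕ} (hc : ∀ i, c i ≤ M) :
    Summable (fun i => (c i : ℝ) / q ^ (i + 1)) := by
  have hq0 : (0 : ℝ) < q := lt_trans one_pos hq1
  have hgeo : Summable (fun i : ℕ => (M : ℝ) * q⁻¹ * (q⁻¹) ^ i) :=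
    (summable_geometric_of_lt_one (by positivity) (inv_lt_one_of_one_lt₀ hq1)).mul_left _
  refine Summable.of_nonneg_of_le (fun i => by positivity) (fun i => ?_) hgeo
  have he : (M : ℝ) * q⁻¹ * (q⁻¹) ^ i = (M : ℝ) / q ^ (i + 1) := by
    ring
  rw [he]
  exact (div_le_div_iff_of_pos_right (pow_pos hq0 _)).2 (by exact_mod_cast hc i)

lemma tsum_digits_le_C (hq1 : 1 < q) {c : ℕ → ℕ} (hc : ∀ i, c i ≤ M) :
    ∑' i, (c i : ℝ) / q ^ (i + 1) ≤ (M : ℝ) / (q - 1) := by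
  have hq0 : (0 : ℝ) < q := lt_trans one_pos hq1
  have hgeo : Summable (fun i : ℕ => (M : ℝ) * q⁻¹ * (q⁻¹) ^ i) :=
    (summable_geometric_of_lt_one (by positivity) (inv_lt_one_of_one_lt₀ hq1)).mul_left _
  have hle : ∑' i, (c i : ℝ) / q ^ (i + 1) ≤ ∑' i : ℕ, (M : ℝ) * q⁻¹ * (q⁻¹) ^ i := by
    refine Summable.tsum_le_tsum (fun i => ?_) (summable_digits hq1 hc) hgeo
    have he : (M : ℝ) * q⁻¹ * (q⁻¹) ^ i = (M : ℝ) / q ^ (i + 1) := by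
      ring
    rw [he]
    exact (div_le_div_iff_of_pos_right (pow_pos hq0 _)).2 (by exact_mod_cast hc i)
  have hval : ∑' i : ℕ, (M : ℝ) * q⁻¹ * (q⁻¹) ^ i = (M : ℝ) / (q - 1) := by
    rw [tsum_mul_left, tsum_geometric_of_lt_one (by positivity) (inv_lt_one_of_one_lt₀ hq1)]
    field_simp
  rw [hval] at hle
  exact hle

lemma tsum_digits_nonneg (hq1 : 1 < q) (c : ℕ → ℕ) :
    (0:ℝ) ≤ ∑' i, (c i : ℝ) / q ^ (i + 1) := by
  have hq0 : (0 : ℝ) < q := lt_trans one_pos hq1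
  exact tsum_nonneg fun i => by positivity

open Classical in
lemma greedy_shift (hq1 : 1 < q) (n : ℕ) :
    ∀ i, gSum M q (q ^ (n + 1) * (x - gSum M q x (n + 1))) i
        = q ^ (n + 1) * (gSum M q x (n + 1 + i) - gSum M q x (n + 1)) ∧
      greedy M q (q ^ (n + 1) * (x - gSum M q x (n + 1))) i = greedy M q x (n + 1 + i) := by
  have hq0 : (0 : ℝ) < q := lt_trans one_pos hq1
  have hP : (0 : ℝ) < q ^ (n + 1) := pow_pos hq0 _
  set y := q ^ (n + 1) * (x - gSum M q x (n + 1)) with hy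
  have key : ∀ i, gSum M q y i = q ^ (n + 1) * (gSum M q x (n + 1 + i) - gSum M q x (n + 1)) →
      greedy M q y i = greedy M q x (n + 1 + i) := by
    intro i hs
    have hiff : ∀ m : ℕ, (gSum M q y i + (m : ℝ) / q ^ (i + 1) ≤ y)
        ↔ (gSum M q x (n + 1 + i) + (m : ℝ) / q ^ (n + 1 + i + 1) ≤ x) := by
      intro m
      have hm : (m : ℝ) / q ^ (n + 1 + i + 1) * q ^ (n + 1) = (m : ℝ) / q ^ (i + 1) := by
        have hp : (q : ℝ) ^ (n + 1 + i + 1) = q ^ (n + 1) * q ^ (i + 1) := by ring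
        rw [hp]
        field_simp
      rw [hs, hy]
      constructor
      · intro h
        have h2 : q ^ (n + 1) * (gSum M q x (n + 1 + i) + (m : ℝ) / q ^ (n + 1 + i + 1))
            ≤ q ^ (n + 1) * x := by nlinarith [hm]
        exact (mul_le_mul_iff_right₀ hP).1 h2
      · intro h
        have h2 : q ^ (n + 1) * (gSum M q x (n + 1 + i) + (m : ℝ) / q ^ (n + 1 + i + 1))
            ≤ q ^ (n + 1) * x := (mul_le_mul_iff_right₀ hP).2 h
        nlinarith [hm]
    show gDigit M q y (gSum M q y i) i = gDigit M q x (gSum M q x (n + 1 + i)) (n + 1 + i)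
    unfold gDigit
    exact fgCongr hiff M
  intro i
  induction i with
  | zero =>
    have hs : gSum M q y 0 = q ^ (n + 1) * (gSum M q x (n + 1 + 0) - gSum M q x (n + 1)) := by
      simp [gSum]
    exact ⟨hs, key 0 hs⟩
  | succ i ih =>
    obtain ⟨hs, hd⟩ := ih
    have hidx : n + 1 + (i + 1) = (n + 1 + i) + 1 := by omega
    have hsum : gSum M q y (i + 1)
        = q ^ (n + 1) * (gSum M q x (n + 1 + (i + 1)) - gSum M q x (n + 1)) := by
      rw [hidx, gSum_succ, gSum_succ, hd, hs]
      have hp : (q : ℝ) ^ (n + 1 + i + 1) = q ^ (n + 1) * q ^ (i + 1) := by ring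
      rw [hp]
      have h1 : (q : ℝ) ^ (n + 1) ≠ 0 := ne_of_gt hP
      have h2 : (q : ℝ) ^ (i + 1) ≠ 0 := ne_of_gt (pow_pos hq0 _)
      field_simp
      ring
    exact ⟨hsum, key (i + 1) hsum⟩

open Classical in
lemma greedy_lt_quasi (hq1 : 1 < q) (hq2 : q ≤ (M : ℝ) + 1) {y : ℝ} (hy0 : 0 ≤ y)
    (hy1 : y < 1) : LexLt (greedy M q y) (quasiGreedy M q 1) := by
  have hq0 : (0 : ℝ) < q := lt_trans one_pos hq1
  have hne : ∃ n, greedy M q y n ≠ quasiGreedy M q 1 n := by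
    by_contra hcon
    push_neg at hcon
    obtain ⟨N, hN⟩ := pow_unbounded_of_one_lt ((M : ℝ) / (q - 1) / (1 - y)) hq1
    have h1 : ((M : ℝ) / (q - 1)) / q ^ N < 1 - y := by
      rw [div_lt_iff₀ (pow_pos hq0 N)]
      rw [div_lt_iff₀ (by linarith : (0:ℝ) < 1 - y)] at hN
      linarith
    have h2 : gSum M q y N = qgSum M q 1 N := by
      rw [gSum_eq_sum, qgSum_eq_sum]
      exact Finset.sum_congr rfl fun i _ => by rw [hcon i]
    have h3 := qgSum_tail hq1 hq2 N
    have h4 := gSum_le (M := M) (q := q) hy0 N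
    linarith
  refine ⟨Nat.find hne, fun k hk => not_ne_iff.mp (Nat.find_min hne hk), ?_⟩
  have hdiff : greedy M q y (Nat.find hne) ≠ quasiGreedy M q 1 (Nat.find hne) :=
    Nat.find_spec hne
  have hs : gSum M q y (Nat.find hne) = qgSum M q 1 (Nat.find hne) := by
    rw [gSum_eq_sum, qgSum_eq_sum]
    exact Finset.sum_congr rfl fun i hi => by
      rw [not_ne_iff.mp (Nat.find_min hne (Finset.mem_range.mp hi))]
  have hle : greedy M q y (Nat.find hne) ≤ quasiGreedy M q 1 (Nat.find hne) := by
    show gDigit M q y (gSum M q y (Nat.find hne)) (Nat.find hne)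
        ≤ qgDigit M q 1 (qgSum M q 1 (Nat.find hne)) (Nat.find hne)
    unfold gDigit qgDigit
    refine Nat.findGreatest_mono (fun m hm => ?_) le_rfl
    rw [hs] at hm
    exact lt_of_le_of_lt hm hy1
  exact lt_of_le_of_ne hle hdiff

open Classical in
lemma greedy_lexLt (hq1 : 1 < q) (hq2 : q ≤ (M : ℝ) + 1) {x x' : ℝ} (hx0 : 0 ≤ x)
    (hxx : x < x') (hxC : x' ≤ (M : ℝ) / (q - 1)) :
    LexLt (greedy M q x) (greedy M q x') := by
  have hx'0 : 0 ≤ x' := le_trans hx0 (le_of_lt hxx)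
  have hxC' : x ≤ (M : ℝ) / (q - 1) := le_trans (le_of_lt hxx) hxC
  have hne : ∃ n, greedy M q x n ≠ greedy M q x' n := by
    by_contra hcon
    push_neg at hcon
    have hfe : (fun i => (greedy M q x i : ℝ) / q ^ (i + 1))
        = fun i => (greedy M q x' i : ℝ) / q ^ (i + 1) := by
      funext i; rw [hcon i]
    have := (hasSum_greedy hq1 hq2 hx0 hxC').unique
      (hfe ▸ hasSum_greedy hq1 hq2 hx'0 hxC)
    linarith
  refine ⟨Nat.find hne, fun k hk => not_ne_iff.mp (Nat.find_min hne hk), ?_⟩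
  have hdiff := Nat.find_spec hne
  have hs : gSum M q x (Nat.find hne) = gSum M q x' (Nat.find hne) := by
    rw [gSum_eq_sum, gSum_eq_sum]
    exact Finset.sum_congr rfl fun i hi => by
      rw [not_ne_iff.mp (Nat.find_min hne (Finset.mem_range.mp hi))]
  have hle : greedy M q x (Nat.find hne) ≤ greedy M q x' (Nat.find hne) := by
    show gDigit M q x (gSum M q x (Nat.find hne)) (Nat.find hne)
        ≤ gDigit M q x' (gSum M q x' (Nat.find hne)) (Nat.find hne)
    unfold gDigit
    refine Nat.findGreatest_mono (fun m hm => ?_) le_rfl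
    rw [hs] at hm
    linarith
  exact lt_of_le_of_ne hle hdiff

open Classical in
lemma tsum_shift_split (hq1 : 1 < q) {c : ℕ → ℕ} (hc : ∀ i, c i ≤ M) (k : ℕ) :
    ∑' i, (c i : ℝ) / q ^ (i + 1)
      = (∑ i ∈ Finset.range k, (c i : ℝ) / q ^ (i + 1))
        + (∑' i, (c (k + i) : ℝ) / q ^ (i + 1)) / q ^ k := by
  have hq0 : (0 : ℝ) < q := lt_trans one_pos hq1
  have hqk : (q : ℝ) ^ k ≠ 0 := ne_of_gt (pow_pos hq0 _)
  have hsum := summable_digits hq1 hc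
  rw [← Summable.sum_add_tsum_nat_add k hsum]
  congr 1
  rw [div_eq_mul_inv, ← tsum_mul_right]
  congr 1
  funext i
  rw [Nat.add_comm k i]
  have hp : (q : ℝ) ^ (i + k + 1) = q ^ (i + 1) * q ^ k := by ring
  rw [hp]
  ring

def IsAdm (M : ℕ) (q : ℝ) (c : ℕ → ℕ) : Prop :=
  (∀ i, c i ≤ M) ∧ ∀ n, c n < M → LexLt (fun i => c (n + 1 + i)) (quasiGreedy M q 1)

lemma isAdm_shift {c : ℕ → ℕ} (h : IsAdm M q c) (k : ℕ) :
    IsAdm M q (fun i => c (k + i)) := by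
  refine ⟨fun i => h.1 _, fun n hn => ?_⟩
  have hlex := h.2 (k + n) hn
  have he : (fun i => c (k + n + 1 + i)) = fun i => c (k + (n + 1 + i)) := by
    funext i; congr 1; omega
  rw [he] at hlex
  exact hlex

lemma adm_step (hq1 : 1 < q) (hq2 : q ≤ (M : ℝ) + 1) {c : ℕ → ℕ} (hadm : IsAdm M q c)
    (hlt : LexLt c (quasiGreedy M q 1)) :
    ∃ k : ℕ, IsAdm M q (fun i => c (k + 1 + i)) ∧
      LexLt (fun i => c (k + 1 + i)) (quasiGreedy M q 1) ∧
      ∑' i, (c i : ℝ) / q ^ (i + 1)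
        ≤ qgSum M q 1 (k + 1)
          + ((∑' i, (c (k + 1 + i) : ℝ) / q ^ (i + 1)) - 1) / q ^ (k + 1) := by
  obtain ⟨k, hpre, hk⟩ := hlt
  have hq0 : (0 : ℝ) < q := lt_trans one_pos hq1
  have hp1 : (0 : ℝ) < q ^ (k + 1) := pow_pos hq0 _
  have hckM : c k < M := lt_of_lt_of_le hk (quasiGreedy_le k)
  have hadm' : IsAdm M q (fun i => c (k + 1 + i)) := isAdm_shift hadm (k + 1)
  have hlex' : LexLt (fun i => c (k + 1 + i)) (quasiGreedy M q 1) := hadm.2 k hckM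
  refine ⟨k, hadm', hlex', ?_⟩
  rw [tsum_shift_split hq1 hadm.1 (k + 1)]
  have hfin : ∑ i ∈ Finset.range (k + 1), (c i : ℝ) / q ^ (i + 1)
      ≤ qgSum M q 1 (k + 1) - 1 / q ^ (k + 1) := by
    rw [Finset.sum_range_succ, qgSum_succ]
    have hpresum : ∑ i ∈ Finset.range k, (c i : ℝ) / q ^ (i + 1) = qgSum M q 1 k := by
      rw [qgSum_eq_sum]
      exact Finset.sum_congr rfl fun i hi => by rw [hpre i (Finset.mem_range.mp hi)]
    rw [hpresum]
    have hck : (c k : ℝ) + 1 ≤ (quasiGreedy M q 1 k : ℝ) := by exact_mod_cast hk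
    have hdiv : ((c k : ℝ) + 1) / q ^ (k + 1) ≤ (quasiGreedy M q 1 k : ℝ) / q ^ (k + 1) :=
      (div_le_div_iff_of_pos_right hp1).2 hck
    have he : ((c k : ℝ) + 1) / q ^ (k + 1)
        = (c k : ℝ) / q ^ (k + 1) + 1 / q ^ (k + 1) := by ring
    linarith
  have he2 : ((∑' i, (c (k + 1 + i) : ℝ) / q ^ (i + 1)) - 1) / q ^ (k + 1)
      = (∑' i, (c (k + 1 + i) : ℝ) / q ^ (i + 1)) / q ^ (k + 1) - 1 / q ^ (k + 1) := by
    ring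
  linarith

lemma adm_tsum_le_aux (hq1 : 1 < q) (hq2 : q ≤ (M : ℝ) + 1) :
    ∀ N : ℕ, ∀ c : ℕ → ℕ, IsAdm M q c → LexLt c (quasiGreedy M q 1) →
      ∑' i, (c i : ℝ) / q ^ (i + 1) ≤ 1 + ((M : ℝ) / (q - 1)) / q ^ N := by
  have hq0 : (0 : ℝ) < q := lt_trans one_pos hq1
  intro N
  induction N with
  | zero =>
    intro c hadm _
    have h1 := tsum_digits_le_C hq1 hadm.1
    simp only [pow_zero, div_one]
    linarith
  | succ N ih =>
    intro c hadm hlex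
    obtain ⟨k, hadm', hlex', hstep⟩ := adm_step hq1 hq2 hadm hlex
    have hTle := ih _ hadm' hlex'
    have hqg := qgSum_lt (M := M) (q := q) one_pos (k + 1)
    have hp1 : (0 : ℝ) < q ^ (k + 1) := pow_pos hq0 _
    have h1 : ((∑' i, (c (k + 1 + i) : ℝ) / q ^ (i + 1)) - 1) / q ^ (k + 1)
        ≤ (((M : ℝ) / (q - 1)) / q ^ N) / q ^ (k + 1) :=
      (div_le_div_iff_of_pos_right hp1).2 (by linarith)
    have h2 : (((M : ℝ) / (q - 1)) / q ^ N) / q ^ (k + 1)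
        ≤ ((M : ℝ) / (q - 1)) / q ^ (N + 1) := by
      rw [div_div]
      have hCpos : (0 : ℝ) ≤ (M : ℝ) / (q - 1) := by
        have := one_le_C (M := M) hq1 hq2; linarith
      have hle : (q : ℝ) ^ (N + 1) ≤ q ^ N * q ^ (k + 1) := by
        have : (q : ℝ) ^ 1 ≤ q ^ (k + 1) :=
          pow_le_pow_right₀ (le_of_lt hq1) (by omega)
        calc (q : ℝ) ^ (N + 1) = q ^ N * q ^ 1 := by ring
          _ ≤ q ^ N * q ^ (k + 1) := by
              exact mul_le_mul_of_nonneg_left this (le_of_lt (pow_pos hq0 _))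
      exact div_le_div_of_nonneg_left hCpos (pow_pos hq0 _) hle
    linarith

lemma adm_tsum_le_one (hq1 : 1 < q) (hq2 : q ≤ (M : ℝ) + 1) {c : ℕ → ℕ}
    (hadm : IsAdm M q c) (hlex : LexLt c (quasiGreedy M q 1)) :
    ∑' i, (c i : ℝ) / q ^ (i + 1) ≤ 1 := by
  have htd : Filter.Tendsto (fun N : ℕ => 1 + ((M : ℝ) / (q - 1)) / q ^ N)
      Filter.atTop (nhds 1) := by
    have := (tendsto_C_div_pow hq1 ((M : ℝ) / (q - 1))).const_add 1
    simpa using this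
  exact ge_of_tendsto' htd fun N => adm_tsum_le_aux hq1 hq2 N c hadm hlex

lemma adm_tsum_lt_one (hq1 : 1 < q) (hq2 : q ≤ (M : ℝ) + 1) {c : ℕ → ℕ}
    (hadm : IsAdm M q c) (hlex : LexLt c (quasiGreedy M q 1)) :
    ∑' i, (c i : ℝ) / q ^ (i + 1) < 1 := by
  have hq0 : (0 : ℝ) < q := lt_trans one_pos hq1
  obtain ⟨k, hadm', hlex', hstep⟩ := adm_step hq1 hq2 hadm hlex
  have hT := adm_tsum_le_one hq1 hq2 hadm' hlex'
  have hqg := qgSum_lt (M := M) (q := q) one_pos (k + 1)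
  have hp1 : (0 : ℝ) < q ^ (k + 1) := pow_pos hq0 _
  have h1 : ((∑' i, (c (k + 1 + i) : ℝ) / q ^ (i + 1)) - 1) / q ^ (k + 1) ≤ 0 :=
    div_nonpos_of_nonpos_of_nonneg (by linarith) (le_of_lt hp1)
  linarith

open Classical in
lemma greedy_of_adm (hq1 : 1 < q) (hq2 : q ≤ (M : ℝ) + 1) {c : ℕ → ℕ}
    (hadm : IsAdm M q c) :
    ∀ n, gSum M q (∑' i, (c i : ℝ) / q ^ (i + 1)) n
        = ∑ i ∈ Finset.range n, (c i : ℝ) / q ^ (i + 1) ∧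
      greedy M q (∑' i, (c i : ℝ) / q ^ (i + 1)) n = c n := by
  have hq0 : (0 : ℝ) < q := lt_trans one_pos hq1
  set x := ∑' i, (c i : ℝ) / q ^ (i + 1) with hx
  have key : ∀ n, gSum M q x n = ∑ i ∈ Finset.range n, (c i : ℝ) / q ^ (i + 1) →
      greedy M q x n = c n := by
    intro n hs
    have hp1 : (0 : ℝ) < q ^ (n + 1) := pow_pos hq0 _
    have hsplit := tsum_shift_split hq1 hadm.1 (n + 1)
    have hTnn : (0 : ℝ) ≤ ∑' i, (c (n + 1 + i) : ℝ) / q ^ (i + 1) :=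
      tsum_digits_nonneg hq1 _
    show gDigit M q x (gSum M q x n) n = c n
    unfold gDigit
    rw [Nat.findGreatest_eq_iff]
    refine ⟨hadm.1 n, fun _ => ?_, fun m hm hmM => ?_⟩
    · rw [hs]
      have he : ∑ i ∈ Finset.range n, (c i : ℝ) / q ^ (i + 1) + (c n : ℝ) / q ^ (n + 1)
          = ∑ i ∈ Finset.range (n + 1), (c i : ℝ) / q ^ (i + 1) :=
        (Finset.sum_range_succ _ _).symm
      rw [he, hx, hsplit]
      have : (0 : ℝ) ≤ (∑' i, (c (n + 1 + i) : ℝ) / q ^ (i + 1)) / q ^ (n + 1) :=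
        div_nonneg hTnn (le_of_lt hp1)
      linarith
    · intro hcon
      rw [hs] at hcon
      have hcnM : c n < M := lt_of_lt_of_le hm hmM
      have hlex' := hadm.2 n hcnM
      have hadm' : IsAdm M q (fun i => c (n + 1 + i)) := isAdm_shift hadm (n + 1)
      have hT1 : ∑' i, (c (n + 1 + i) : ℝ) / q ^ (i + 1) < 1 :=
        adm_tsum_lt_one hq1 hq2 hadm' hlex'
      have hm' : (c n : ℝ) + 1 ≤ (m : ℝ) := by exact_mod_cast hm
      have hdiv : ((c n : ℝ) + 1) / q ^ (n + 1) ≤ (m : ℝ) / q ^ (n + 1) :=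
        (div_le_div_iff_of_pos_right hp1).2 hm'
      have hxval : x = ∑ i ∈ Finset.range (n + 1), (c i : ℝ) / q ^ (i + 1)
          + (∑' i, (c (n + 1 + i) : ℝ) / q ^ (i + 1)) / q ^ (n + 1) := hsplit
      have hTd : (∑' i, (c (n + 1 + i) : ℝ) / q ^ (i + 1)) / q ^ (n + 1)
          < 1 / q ^ (n + 1) := (div_lt_div_iff_of_pos_right hp1).2 hT1
      have hsum1 : ∑ i ∈ Finset.range (n + 1), (c i : ℝ) / q ^ (i + 1)
          = ∑ i ∈ Finset.range n, (c i : ℝ) / q ^ (i + 1) + (c n : ℝ) / q ^ (n + 1) :=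
        Finset.sum_range_succ _ _
      have he2 : ((c n : ℝ) + 1) / q ^ (n + 1)
          = (c n : ℝ) / q ^ (n + 1) + 1 / q ^ (n + 1) := by ring
      linarith
  intro n
  induction n with
  | zero => exact ⟨rfl, key 0 rfl⟩
  | succ n ih =>
    have hsum : gSum M q x (n + 1) = ∑ i ∈ Finset.range (n + 1), (c i : ℝ) / q ^ (i + 1) := by
      rw [gSum_succ, ih.1, ih.2, Finset.sum_range_succ]
    exact ⟨hsum, key (n + 1) hsum⟩

end Aux

/-- Theorem 3.2 (b): for fixed `q ∈ (1, M+1]`, the map `x ↦ (b_i)`, the greedy expansion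
of `x`, is a strictly increasing one-to-one correspondence between `[0, M/(q-1)]` and the
set of all sequences with digits in `{0,…,M}` satisfying `b_{n+1}b_{n+2}… < α_1α_2…`
whenever `b_n < M`, where `(α_i)` is the quasi-greedy expansion of `1`. -/
theorem greedy_bijection (M : ℕ) (hM : 0 < M) (q : ℝ) (hq1 : 1 < q)
    (hq2 : q ≤ (M : ℝ) + 1) :
    (∀ x x' : ℝ, 0 ≤ x → x < x' → x' ≤ (M : ℝ) / (q - 1) →
      LexLt (greedy M q x) (greedy M q x')) ∧
    Set.BijOn (fun x : ℝ => greedy M q x) (Set.Icc 0 ((M : ℝ) / (q - 1)))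
      {b : ℕ → ℕ | (∀ i, b i ≤ M) ∧
        ∀ n, b n < M → LexLt (fun i => b (n + 1 + i)) (quasiGreedy M q 1)} := by
  have hq0 : (0 : ℝ) < q := lt_trans one_pos hq1
  constructor
  · intro x x' hx0 hxx hxC
    exact greedy_lexLt hq1 hq2 hx0 hxx hxC
  · refine ⟨?_, ?_, ?_⟩
    · intro x hx
      obtain ⟨hx0, hxC⟩ := hx
      refine ⟨fun i => greedy_le i, fun n hn => ?_⟩
      have hsh := greedy_shift (M := M) (x := x) hq1 n
      have hp1 : (0 : ℝ) < q ^ (n + 1) := pow_pos hq0 _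
      have hy0 : 0 ≤ q ^ (n + 1) * (x - gSum M q x (n + 1)) := by
        have hg := gSum_le (M := M) (q := q) hx0 (n + 1)
        exact mul_nonneg (le_of_lt hp1) (by linarith)
      have hy1 : q ^ (n + 1) * (x - gSum M q x (n + 1)) < 1 := by
        have hmax := greedy_max (M := M) (q := q) (x := x) hn
        have e : ((greedy M q x n : ℝ) + 1) / q ^ (n + 1)
            = (greedy M q x n : ℝ) / q ^ (n + 1) + 1 / q ^ (n + 1) := by ring
        rw [e] at hmax
        have h2 : x - gSum M q x (n + 1) < 1 / q ^ (n + 1) := by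
          rw [gSum_succ]; linarith
        have h3 := (mul_lt_mul_iff_right₀ hp1).2 h2
        rw [mul_one_div, div_self (ne_of_gt hp1)] at h3
        exact h3
      have hlex := greedy_lt_quasi hq1 hq2 hy0 hy1
      have hfe : (fun i => greedy M q x (n + 1 + i))
          = greedy M q (q ^ (n + 1) * (x - gSum M q x (n + 1))) := by
        funext i; exact ((hsh i).2).symm
      show LexLt (fun i => greedy M q x (n + 1 + i)) (quasiGreedy M q 1)
      rw [hfe]
      exact hlex
    · intro x hx x' hx' heq
      by_contra hne
      simp only at heq
      rcases lt_or_gt_of_ne hne with h | h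
      · obtain ⟨n, _, hlt⟩ := greedy_lexLt hq1 hq2 hx.1 h hx'.2
        rw [heq] at hlt
        exact lt_irrefl _ hlt
      · obtain ⟨n, _, hlt⟩ := greedy_lexLt hq1 hq2 hx'.1 h hx.2
        rw [heq] at hlt
        exact lt_irrefl _ hlt
    · intro b hb
      obtain ⟨hble, hbadm⟩ := hb
      have hadm : IsAdm M q b := ⟨hble, hbadm⟩
      refine ⟨∑' i, (b i : ℝ) / q ^ (i + 1),
        ⟨tsum_digits_nonneg hq1 b, tsum_digits_le_C hq1 hble⟩, ?_⟩
      show greedy M q (∑' i, (b i : ℝ) / q ^ (i + 1)) = b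
      funext n
      exact (greedy_of_adm hq1 hq2 hadm n).2
end

section
/- Let M be a positive integer and q > 1 a real number. If a sequence (β_i) with digits in {0,...,M} is an expansion of 1 (i.e., Σ β_i q^{−i} = 1) and satisfies β_{n+1}β_{n+2}... < β_1β_2... (strict lexicographic inequality) whenever β_n < M, then (β_i) is the greedy expansion of 1, i.e., it is the lexicographically largest sequence (c_i) with digits in {0,...,M} satisfying Σ c_i q^{−i} ≤ 1. -/
noncomputable def tailSum (q : ℝ) (c : ℕ → ℕ) (k : ℕ) : ℝ := ∑' i, (c (k+i) : ℝ) / q ^ (i+1)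

lemma summable_tail (M : ℕ) (q : ℝ) (hq : 1 < q) (c : ℕ → ℕ) (hc : ∀ i, c i ≤ M) (k : ℕ) :
    Summable (fun i => (c (k+i) : ℝ) / q ^ (i+1)) := by
  have hq0 : (0:ℝ) < q := lt_trans one_pos hq
  have hlt : 1/q < 1 := by rw [div_lt_one hq0]; exact hq
  have hge : (0:ℝ) ≤ 1/q := by positivity
  have hg : Summable (fun i : ℕ => (M:ℝ) * (1/q)^(i+1)) := by
    have := (summable_geometric_of_lt_one hge hlt).mul_left ((M:ℝ) * (1/q))
    convert this using 2 with i
    · rfl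
    ring
  refine Summable.of_nonneg_of_le (fun i => by positivity) (fun i => ?_) hg
  rw [div_eq_mul_inv, one_div, inv_pow]
  have : ((c (k+i) : ℝ)) ≤ (M:ℝ) := by exact_mod_cast hc (k+i)
  have h2 : (0:ℝ) ≤ (q ^ (i+1))⁻¹ := by positivity
  nlinarith

lemma tailSum_split (M : ℕ) (q : ℝ) (hq : 1 < q) (c : ℕ → ℕ) (hc : ∀ i, c i ≤ M) (k N : ℕ) :
    tailSum q c k = (∑ i ∈ Finset.range N, (c (k+i) : ℝ) / q ^ (i+1))
      + (q ^ N)⁻¹ * tailSum q c (k+N) := by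
  have hq0 : (0:ℝ) < q := lt_trans one_pos hq
  have hs := summable_tail M q hq c hc k
  rw [tailSum, ← Summable.sum_add_tsum_nat_add N hs]
  congr 1
  rw [tailSum, ← tsum_mul_left]
  apply tsum_congr
  intro i
  have h1 : k + (i + N) = k + N + i := by omega
  have h2 : i + N + 1 = N + (i + 1) := by omega
  rw [h1, h2, pow_add, mul_comm ((q:ℝ)^N), ← div_div, div_eq_mul_inv (_ / _), mul_comm]

lemma tailSum_nonneg (M : ℕ) (q : ℝ) (hq : 1 < q) (c : ℕ → ℕ) (hc : ∀ i, c i ≤ M) (k : ℕ) :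
    0 ≤ tailSum q c k := by
  have hq0 : (0:ℝ) < q := lt_trans one_pos hq
  exact tsum_nonneg (fun i => by positivity)

lemma tailSum_le (M : ℕ) (q : ℝ) (hq : 1 < q) (c : ℕ → ℕ) (hc : ∀ i, c i ≤ M) (k : ℕ) :
    tailSum q c k ≤ M / (q - 1) := by
  have hq0 : (0:ℝ) < q := lt_trans one_pos hq
  have hlt : 1/q < 1 := by rw [div_lt_one hq0]; exact hq
  have hge : (0:ℝ) ≤ 1/q := by positivity
  have hg : Summable (fun i : ℕ => (M:ℝ) * (1/q)^(i+1)) := by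
    have := (summable_geometric_of_lt_one hge hlt).mul_left ((M:ℝ) * (1/q))
    convert this using 2 with i
    · rfl
    ring
  have hle : tailSum q c k ≤ ∑' i : ℕ, (M:ℝ) * (1/q)^(i+1) := by
    refine Summable.tsum_le_tsum (fun i => ?_) (summable_tail M q hq c hc k) hg
    rw [div_eq_mul_inv, one_div, inv_pow]
    have : ((c (k+i) : ℝ)) ≤ (M:ℝ) := by exact_mod_cast hc (k+i)
    have h2 : (0:ℝ) ≤ (q ^ (i+1))⁻¹ := by positivity
    nlinarith
  refine hle.trans ?_
  have : ∑' i : ℕ, (M:ℝ) * (1/q)^(i+1) = (M:ℝ) * ((1/q) * (1 - 1/q)⁻¹) := by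
    rw [show (fun i : ℕ => (M:ℝ) * (1/q)^(i+1)) = (fun i : ℕ => (M * (1/q)) * (1/q)^i) from ?_]
    · rw [tsum_mul_left, tsum_geometric_of_lt_one hge hlt]; ring
    · funext i; ring
  rw [this]
  have hq1 : q - 1 > 0 := by linarith
  rw [div_eq_mul_inv]
  apply le_of_eq
  congr 1
  field_simp


lemma tailSum_zero_of_zero (M : ℕ) (q : ℝ) (hq : 1 < q) (c : ℕ → ℕ) (hc : ∀ i, c i ≤ M)
    (j j' : ℕ) (hjj : j ≤ j') (h : tailSum q c j = 0) : tailSum q c j' = 0 := by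
  have hq0 : (0:ℝ) < q := lt_trans one_pos hq
  have hterm : ∀ i, c (j + i) = 0 := by
    intro i
    have hs := summable_tail M q hq c hc j
    have hle := Summable.le_tsum hs i (fun k _ => by positivity)
    rw [← tailSum, h] at hle
    have : (c (j+i) : ℝ) / q ^ (i+1) = 0 := le_antisymm hle (by positivity)
    have hpow : (0:ℝ) < q ^ (i+1) := by positivity
    field_simp at this
    rw [mul_zero] at this
    exact_mod_cast this
  have : ∀ i, (c (j' + i) : ℝ) / q ^ (i+1) = 0 := by
    intro i
    have := hterm (j' - j + i)
    rw [show j + (j' - j + i) = j' + i by omega] at this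
    rw [this]; simp
  rw [tailSum, tsum_congr this, tsum_zero]

/-- Key step: from a bad index we get a worse one, with geometric amplification. -/
lemma step_lemma (M : ℕ) (q : ℝ) (hq : 1 < q)
    (β : ℕ → ℕ) (hβM : ∀ i, β i ≤ M) (hβ1 : tailSum q β 0 = 1)
    (hβ : ∀ n, β n < M → LexLt (fun i => β (n + 1 + i)) β)
    (n : ℕ) (hn : β n < M) :
    ∃ m n', β n' < M ∧ m + 1 ≤ n' ∧
      tailSum q β (m+1) + 1 + q^(m+1) * (tailSum q β (n+1) - 1) ≤ tailSum q β (n'+1) := by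
  have hq0 : (0:ℝ) < q := lt_trans one_pos hq
  obtain ⟨m, hagree0, hlt0⟩ := hβ n hn
  have hagree : ∀ k, k < m → β (n+1+k) = β k := hagree0
  have hlt : β (n+1+m) < β m := hlt0
  refine ⟨m, n + m + 1, ?_, by omega, ?_⟩
  · have h3 : n+m+1 = n+1+m := by omega
    have := hβM m
    rw [h3]; omega
  · have hs1 := tailSum_split M q hq β hβM (n+1) (m+1)
    have hs0 := tailSum_split M q hq β hβM 0 (m+1)
    rw [hβ1] at hs0
    have hidx : n + 1 + (m + 1) = n + m + 1 + 1 := by omega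
    rw [hidx] at hs1
    have hA : (∑ i ∈ Finset.range (m+1), (β (n+1+i) : ℝ) / q ^ (i+1))
        ≤ (∑ i ∈ Finset.range (m+1), (β (0+i) : ℝ) / q ^ (i+1)) - (q^(m+1))⁻¹ := by
      rw [Finset.sum_range_succ, Finset.sum_range_succ]
      have h1 : ∀ i ∈ Finset.range m, (β (n+1+i) : ℝ) / q ^ (i+1) = (β (0+i) : ℝ) / q ^ (i+1) := by
        intro i hi
        rw [hagree i (Finset.mem_range.mp hi)]
        norm_num
      rw [Finset.sum_congr rfl h1]
      have h2 : (β (n+1+m) : ℝ) ≤ (β (0+m) : ℝ) - 1 := by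
        rw [zero_add]
        have : (β (n+1+m) : ℝ) + 1 ≤ (β m : ℝ) := by exact_mod_cast hlt
        linarith
      have hpow : (0:ℝ) < q ^ (m+1) := by positivity
      have h3 : (β (n+1+m) : ℝ) / q ^ (m+1) ≤ ((β (0+m) : ℝ) - 1) / q ^ (m+1) := by gcongr
      rw [sub_div, one_div] at h3
      linarith [h3]
    have hpow : (0:ℝ) < q ^ (m+1) := by positivity
    simp only [zero_add] at hs0 hA
    have e1 : q ^ (m+1) * tailSum q β (n+1)
        = q ^ (m+1) * (∑ i ∈ Finset.range (m+1), (β (n+1+i) : ℝ) / q ^ (i+1))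
          + tailSum q β (n+m+1+1) := by
      rw [hs1, mul_add, ← mul_assoc, mul_inv_cancel₀ (ne_of_gt hpow), one_mul]
    have e0 : q ^ (m+1) * 1
        = q ^ (m+1) * (∑ i ∈ Finset.range (m+1), (β i : ℝ) / q ^ (i+1))
          + tailSum q β (m+1) := by
      nth_rewrite 1 [hs0]
      rw [mul_add, ← mul_assoc, mul_inv_cancel₀ (ne_of_gt hpow), one_mul]
    have e2 : q ^ (m+1) * (∑ i ∈ Finset.range (m+1), (β (n+1+i) : ℝ) / q ^ (i+1))
        ≤ q ^ (m+1) * (∑ i ∈ Finset.range (m+1), (β i : ℝ) / q ^ (i+1)) - 1 := by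
      have := mul_le_mul_of_nonneg_left hA hpow.le
      rw [mul_sub, mul_inv_cancel₀ (ne_of_gt hpow)] at this
      exact this
    nlinarith [e1, e0, e2]

lemma tail_lt_one (M : ℕ) (q : ℝ) (hq : 1 < q)
    (β : ℕ → ℕ) (hβM : ∀ i, β i ≤ M) (hβ1 : tailSum q β 0 = 1)
    (hβ : ∀ n, β n < M → LexLt (fun i => β (n + 1 + i)) β) :
    ∀ n, β n < M → tailSum q β (n+1) < 1 := by
  by_contra hcon
  push_neg at hcon
  obtain ⟨n₀, hn₀, ht₀⟩ := hcon
  have hq0 : (0:ℝ) < q := lt_trans one_pos hq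
  obtain ⟨m, n₁, hn₁, hmn₁, hstep⟩ := step_lemma M q hq β hβM hβ1 hβ n₀ hn₀
  have hq3 : 0 ≤ q^(m+1)*(tailSum q β (n₀+1) - 1) := by
    apply mul_nonneg (by positivity); linarith
  have hT1pos : 0 < tailSum q β (m+1) := by
    rcases lt_or_eq_of_le (tailSum_nonneg M q hq β hβM (m+1)) with h | h
    · exact h
    · exfalso
      have hzero := tailSum_zero_of_zero M q hq β hβM (m+1) (n₁+1) (by omega) h.symm
      rw [hzero] at hstep
      linarith
  set ε := tailSum q β (m+1) with hε
  have key : ∀ k : ℕ, ∃ n, β n < M ∧ 1 + q^k * ε ≤ tailSum q β (n+1) := by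
    intro k
    induction k with
    | zero =>
      refine ⟨n₁, hn₁, ?_⟩
      rw [pow_zero, one_mul]
      linarith
    | succ k ih =>
      obtain ⟨n, hn, ht⟩ := ih
      obtain ⟨m', n', hn', hmn', hstep'⟩ := step_lemma M q hq β hβM hβ1 hβ n hn
      refine ⟨n', hn', ?_⟩
      have hqk : 0 < q^k := by positivity
      have h1 : (1:ℝ) ≤ tailSum q β (n+1) := by nlinarith
      have h2 : q ≤ q^(m'+1) := by
        calc q = q^1 := (pow_one q).symm
        _ ≤ q^(m'+1) := pow_le_pow_right₀ (le_of_lt hq) (by omega)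
      have h3 : q * (q^k * ε) ≤ q^(m'+1) * (tailSum q β (n+1) - 1) := by
        have hge : q^k * ε ≤ tailSum q β (n+1) - 1 := by linarith
        have hpos : 0 < q^k * ε := mul_pos hqk hT1pos
        nlinarith
      have h4 : 0 ≤ tailSum q β (m'+1) := tailSum_nonneg M q hq β hβM _
      have : 1 + q^(k+1)*ε = 1 + q*(q^k*ε) := by ring
      rw [this]
      linarith
  obtain ⟨k, hk⟩ := pow_unbounded_of_one_lt ((M/(q-1))/ε) hq
  obtain ⟨n, hn, ht⟩ := key k
  have hb := tailSum_le M q hq β hβM (n+1)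
  have hlt2 : (M:ℝ)/(q-1) < q^k * ε := by
    rw [div_lt_iff₀ hT1pos] at hk
    linarith [hk]
  linarith

/-- Lemma 3.3: if an expansion `(β_i)` of `1` satisfies `β_{n+1}β_{n+2}… < β_1β_2…`
whenever `β_n < M`, then it is the greedy expansion of `1`, i.e. the lexicographically
largest sequence `(c_i)` with digits in `{0,…,M}` satisfying `∑ c_i q^{-i} ≤ 1`. -/
theorem eq_greedy_of_lex_lt (M : ℕ) (hM : 0 < M) (q : ℝ) (hq : 1 < q)
    (β : ℕ → ℕ) (hβM : ∀ i, β i ≤ M) (hβ1 : ∑' i, (β i : ℝ) / q ^ (i + 1) = 1)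
    (hβ : ∀ n, β n < M → LexLt (fun i => β (n + 1 + i)) β) :
    ∀ c : ℕ → ℕ, (∀ i, c i ≤ M) → (∑' i, (c i : ℝ) / q ^ (i + 1)) ≤ 1 →
      LexLe c β := by
  intro c hcM hc1
  have hq0 : (0:ℝ) < q := lt_trans one_pos hq
  have hβ1' : tailSum q β 0 = 1 := by
    rw [tailSum]; simp only [zero_add]; exact hβ1
  by_contra hcon
  have hne : ∃ n, c n ≠ β n := by
    by_contra h
    push_neg at h
    exact hcon (Or.inr (funext h))
  classical
  let n := Nat.find hne
  have hfind : c n ≠ β n := Nat.find_spec hne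
  have hfst : ∀ k, k < n → c k = β k := by
    intro k hk
    by_contra h
    exact absurd (Nat.find_min hne hk) (by simp [h])
  have hβn : β n < c n := by
    rcases lt_trichotomy (c n) (β n) with h | h | h
    · exact absurd (Or.inl ⟨n, hfst, h⟩) hcon
    · exact absurd h hfind
    · exact h
  have hβnM : β n < M := lt_of_lt_of_le hβn (hcM n)
  have hT := tail_lt_one M q hq β hβM hβ1' hβ n hβnM
  -- partial sums
  have hc0 : tailSum q c 0 ≤ 1 := by
    rw [tailSum]; simp only [zero_add]; exact hc1
  have hpartial : (∑ i ∈ Finset.range (n+1), (c (0+i) : ℝ) / q ^ (i+1)) ≤ tailSum q c 0 := by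
    rw [tailSum]
    exact Summable.sum_le_tsum _ (fun i _ => by positivity) (summable_tail M q hq c hcM 0)
  have hsplit := tailSum_split M q hq β hβM 0 (n+1)
  rw [hβ1'] at hsplit
  simp only [zero_add] at hsplit hpartial
  have hpow : (0:ℝ) < q ^ (n+1) := by positivity
  have hsum_ge : (∑ i ∈ Finset.range (n+1), (β i : ℝ) / q ^ (i+1)) + (q^(n+1))⁻¹
      ≤ ∑ i ∈ Finset.range (n+1), (c i : ℝ) / q ^ (i+1) := by
    rw [Finset.sum_range_succ, Finset.sum_range_succ]
    have h1 : ∀ i ∈ Finset.range n, (β i : ℝ) / q ^ (i+1) = (c i : ℝ) / q ^ (i+1) := by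
      intro i hi
      rw [hfst i (Finset.mem_range.mp hi)]
    rw [Finset.sum_congr rfl h1]
    have h2 : (β n : ℝ) + 1 ≤ (c n : ℝ) := by exact_mod_cast hβn
    have h3 : ((β n : ℝ) + 1) / q ^ (n+1) ≤ (c n : ℝ) / q ^ (n+1) := by gcongr
    rw [add_div, one_div] at h3
    linarith
  have hinvT : (q^(n+1))⁻¹ * tailSum q β (n+1) < (q^(n+1))⁻¹ * 1 := by
    apply mul_lt_mul_of_pos_left hT (inv_pos.mpr hpow)
  have hinv1 : (0:ℝ) < (q^(n+1))⁻¹ := inv_pos.mpr hpow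
  rw [mul_one] at hinvT
  linarith
end
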